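/- arXiv:1907.07903 — 10 statements merged into one kernel-verified Lean document; each statement's English description precedes it below -/
import Mathlib

section
/- Every element of the projective special linear group PSL(2,ℝ) (the quotient of the special linear group SL(2,ℝ) of 2×2 real matrices of determinant 1 by its center) is a commutator; that is, for every g in SL(2,ℝ)/Z(SL(2,ℝ)) there exist a, b in this quotient group with g = a*b*a⁻¹*b⁻¹. In particular PSL(2,ℝ) is uniformly perfect. -/
open Matrix

noncomputable section

namespace PSL2RAux

local notation "SL2R" => Matrix.SpecialLinearGroup (Fin 2) ℝ

/-- The constant `L = (3 + √5)/2`, a root of `x² = 3x - 1`. -/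
def L : ℝ := (3 + Real.sqrt 5) / 2

lemma L_sq : L ^ 2 = 3 * L - 1 := by
  have h5 : Real.sqrt 5 ^ 2 = 5 := Real.sq_sqrt (by norm_num)
  unfold L; nlinarith [h5]

lemma sqrt5_pos : (0:ℝ) < Real.sqrt 5 := Real.sqrt_pos.mpr (by norm_num)

lemma two_L_sub_three : 2 * L - 3 = Real.sqrt 5 := by unfold L; ring

lemma two_L_ne : 2 * L - 3 ≠ 0 := by
  rw [two_L_sub_three]; exact ne_of_gt sqrt5_pos

/-- The diagonal matrix `D = diag(L, 3 - L)` as an element of SL(2,ℝ). -/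
def D : SL2R :=
  ⟨!![L, 0; 0, 3 - L], by
    simp [Matrix.det_fin_two_of]
    linear_combination - L_sq⟩

/-- Every element of SL(2,ℝ) of trace 3 is conjugate to `D`. -/
lemma conj_D (M : SL2R) (h : Matrix.trace (M : Matrix (Fin 2) (Fin 2) ℝ) = 3) :
    ∃ P : SL2R, M = P * D * P⁻¹ := by
  obtain ⟨a, b, c, d, hM⟩ : ∃ a b c d, (M : Matrix (Fin 2) (Fin 2) ℝ) = !![a, b; c, d] :=
    ⟨_, _, _, _, Matrix.eta_fin_two _⟩
  have hdet : a * d - b * c = 1 := by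
    have := M.2; rw [hM] at this; simpa [Matrix.det_fin_two_of] using this
  have htr : a + d = 3 := by
    rw [hM] at h; simpa [Matrix.trace_fin_two_of] using h
  have hL2 : L ^ 2 = 3 * L - 1 := L_sq
  by_cases hc : c ≠ 0
  · -- conjugator with eigenvector columns
    set k : ℝ := ((2 * L - 3) * c)⁻¹ with hk_def
    have hk : k * ((2 * L - 3) * c) = 1 :=
      inv_mul_cancel₀ (mul_ne_zero two_L_ne hc)
    have hdQ : Matrix.det !![L - d, (3 - L - d) * k; c, c * k] = 1 := by
      simp [Matrix.det_fin_two_of]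
      linear_combination hk
    set Q : SL2R := ⟨!![L - d, (3 - L - d) * k; c, c * k], hdQ⟩ with hQ_def
    refine ⟨Q, eq_mul_inv_iff_mul_eq.mpr ?_⟩
    apply Subtype.ext
    rw [Matrix.SpecialLinearGroup.coe_mul, Matrix.SpecialLinearGroup.coe_mul, hM]
    show !![a, b; c, d] * !![L - d, (3 - L - d) * k; c, c * k]
        = !![L - d, (3 - L - d) * k; c, c * k] * !![L, 0; 0, 3 - L]
    ext i j
    fin_cases i <;> fin_cases j <;>
      simp [Matrix.mul_apply, Fin.sum_univ_two]
    · linear_combination L * htr - hdet - hL2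
    · linear_combination k * ((3 - L) * htr - hdet - hL2)
    · ring
    · ring
  · push_neg at hc
    subst hc
    have had : a * d = 1 := by linarith [hdet]
    have hcase : (a - L) * (a - (3 - L)) = 0 := by
      have hd : d = 3 - a := by linarith
      rw [hd] at had
      linear_combination - had - hL2
    rcases mul_eq_zero.mp hcase with h1 | h2
    · -- a = L, d = 3 - L, upper triangular
      have ha : a = L := by linarith [sub_eq_zero.mp h1]
      have hd : d = 3 - L := by linarith
      have h32 : (3 - 2 * L) ≠ 0 := by
        intro h; exact two_L_ne (by linarith)
      have hdQ : Matrix.det !![(1:ℝ), b / (3 - 2 * L); 0, 1] = 1 := by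
        simp [Matrix.det_fin_two_of]
      set Q : SL2R := ⟨!![(1:ℝ), b / (3 - 2 * L); 0, 1], hdQ⟩ with hQ_def
      refine ⟨Q, eq_mul_inv_iff_mul_eq.mpr ?_⟩
      apply Subtype.ext
      rw [Matrix.SpecialLinearGroup.coe_mul, Matrix.SpecialLinearGroup.coe_mul, hM, ha, hd]
      show !![L, b; 0, 3 - L] * !![(1:ℝ), b / (3 - 2 * L); 0, 1]
          = !![(1:ℝ), b / (3 - 2 * L); 0, 1] * !![L, 0; 0, 3 - L]
      ext i j
      have h23 : (-3 + L * 2) ≠ 0 := by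
        have := two_L_ne; intro h; apply this; linarith
      fin_cases i <;> fin_cases j <;>
        simp [Matrix.mul_apply, Fin.sum_univ_two]
      have hk23 : (-3 + L * 2) * (-3 + L * 2)⁻¹ = 1 := mul_inv_cancel₀ h23
      all_goals (try field_simp [h23])
      all_goals (try ring)
      have hinv : (3 - L * 2)⁻¹ = -(-3 + L * 2)⁻¹ := by rw [← inv_neg]; congr 1; ring
      all_goals linear_combination (-b) * hk23 + (b * (2 * L - 3)) * hinv
    · -- a = 3 - L, d = L
      have ha : a = 3 - L := by linarith [sub_eq_zero.mp h2]
      have hd : d = L := by linarith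
      have hdQ : Matrix.det !![b / (2 * L - 3), -1; (1:ℝ), 0] = 1 := by
        simp [Matrix.det_fin_two_of]
      set Q : SL2R := ⟨!![b / (2 * L - 3), -1; (1:ℝ), 0], hdQ⟩ with hQ_def
      refine ⟨Q, eq_mul_inv_iff_mul_eq.mpr ?_⟩
      apply Subtype.ext
      rw [Matrix.SpecialLinearGroup.coe_mul, Matrix.SpecialLinearGroup.coe_mul, hM, ha, hd]
      show !![3 - L, b; 0, L] * !![b / (2 * L - 3), -1; (1:ℝ), 0]
          = !![b / (2 * L - 3), -1; (1:ℝ), 0] * !![L, 0; 0, 3 - L]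
      ext i j
      have h23 : (-3 + L * 2) ≠ 0 := by
        have := two_L_ne; intro h; apply this; linarith
      fin_cases i <;> fin_cases j <;>
        simp [Matrix.mul_apply, Fin.sum_univ_two]
      have hk23 : (-3 + L * 2) * (-3 + L * 2)⁻¹ = 1 := mul_inv_cancel₀ h23
      all_goals (try field_simp [h23])
      all_goals (try ring)
      all_goals linear_combination (-b) * hk23

/-- Any two trace-3 elements of SL(2,ℝ) are conjugate. -/
lemma conj_of_trace_eq (M N : SL2R)
    (hM : Matrix.trace (M : Matrix (Fin 2) (Fin 2) ℝ) = 3)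
    (hN : Matrix.trace (N : Matrix (Fin 2) (Fin 2) ℝ) = 3) :
    ∃ Y : SL2R, N = Y * M * Y⁻¹ := by
  obtain ⟨P, hP⟩ := conj_D M hM
  obtain ⟨Q, hQ⟩ := conj_D N hN
  refine ⟨Q * P⁻¹, ?_⟩
  rw [hP, hQ]
  group

/-- Every element of SL(2,ℝ) is, up to sign, a commutator. -/
lemma sl2r_commutator (A : SL2R) :
    ∃ X Y : SL2R,
      (A : Matrix (Fin 2) (Fin 2) ℝ) = ((X * Y * X⁻¹ * Y⁻¹ : SL2R) : Matrix (Fin 2) (Fin 2) ℝ)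
      ∨ (A : Matrix (Fin 2) (Fin 2) ℝ)
        = -((X * Y * X⁻¹ * Y⁻¹ : SL2R) : Matrix (Fin 2) (Fin 2) ℝ) := by
  obtain ⟨a, b, c, d, hA⟩ : ∃ a b c d, (A : Matrix (Fin 2) (Fin 2) ℝ) = !![a, b; c, d] :=
    ⟨_, _, _, _, Matrix.eta_fin_two _⟩
  have hdet : a * d - b * c = 1 := by
    have := A.2; rw [hA] at this; simpa [Matrix.det_fin_two_of] using this
  have hL2 : L ^ 2 = 3 * L - 1 := L_sq
  by_cases hb : b ≠ 0
  · set z : ℝ := ((a - 1) * (3 - L) + (d - 1) * L) / b with hz_def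
    have hz : z * b = (a - 1) * (3 - L) + (d - 1) * L := by
      rw [hz_def, div_mul_cancel₀ _ hb]
    set X : SL2R := ⟨!![L, 0; z, 3 - L], by
      simp [Matrix.det_fin_two_of]; linear_combination - hL2⟩ with hX_def
    have hXinv : ((X⁻¹ : SL2R) : Matrix (Fin 2) (Fin 2) ℝ) = !![3 - L, 0; -z, L] := by
      rw [Matrix.SpecialLinearGroup.coe_inv, hX_def, Matrix.adjugate_fin_two]
      norm_num
    have htrXinv : Matrix.trace ((X⁻¹ : SL2R) : Matrix (Fin 2) (Fin 2) ℝ) = 3 := by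
      rw [hXinv]; simp [Matrix.trace_fin_two_of]
    have htrN : Matrix.trace ((X⁻¹ * A : SL2R) : Matrix (Fin 2) (Fin 2) ℝ) = 3 := by
      rw [Matrix.SpecialLinearGroup.coe_mul, hXinv, hA]
      simp [Matrix.trace_fin_two_of, Matrix.mul_apply, Fin.sum_univ_two]
      linear_combination - hz
    obtain ⟨Y, hY⟩ := conj_of_trace_eq X⁻¹ (X⁻¹ * A) htrXinv htrN
    refine ⟨X, Y, Or.inl ?_⟩
    have : A = X * Y * X⁻¹ * Y⁻¹ := by
      have := hY
      calc A = X * (X⁻¹ * A) := by group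
        _ = X * (Y * X⁻¹ * Y⁻¹) := by rw [← hY]
        _ = X * Y * X⁻¹ * Y⁻¹ := by group
    rw [this]
  · push_neg at hb
    by_cases hc : c ≠ 0
    · set y : ℝ := ((a - 1) * (3 - L) + (d - 1) * L) / c with hy_def
      have hy : y * c = (a - 1) * (3 - L) + (d - 1) * L := by
        rw [hy_def, div_mul_cancel₀ _ hc]
      set X : SL2R := ⟨!![L, y; 0, 3 - L], by
        simp [Matrix.det_fin_two_of]; linear_combination - hL2⟩ with hX_def
      have hXinv : ((X⁻¹ : SL2R) : Matrix (Fin 2) (Fin 2) ℝ) = !![3 - L, -y; 0, L] := by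
        rw [Matrix.SpecialLinearGroup.coe_inv, hX_def, Matrix.adjugate_fin_two]
        norm_num
      have htrXinv : Matrix.trace ((X⁻¹ : SL2R) : Matrix (Fin 2) (Fin 2) ℝ) = 3 := by
        rw [hXinv]; simp [Matrix.trace_fin_two_of]
      have htrN : Matrix.trace ((X⁻¹ * A : SL2R) : Matrix (Fin 2) (Fin 2) ℝ) = 3 := by
        rw [Matrix.SpecialLinearGroup.coe_mul, hXinv, hA]
        simp [Matrix.trace_fin_two_of, Matrix.mul_apply, Fin.sum_univ_two]
        linear_combination - hy
      obtain ⟨Y, hY⟩ := conj_of_trace_eq X⁻¹ (X⁻¹ * A) htrXinv htrN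
      refine ⟨X, Y, Or.inl ?_⟩
      have : A = X * Y * X⁻¹ * Y⁻¹ := by
        calc A = X * (X⁻¹ * A) := by group
          _ = X * (Y * X⁻¹ * Y⁻¹) := by rw [← hY]
          _ = X * Y * X⁻¹ * Y⁻¹ := by group
      rw [this]
    · -- diagonal case
      push_neg at hc
      subst hb; subst hc
      have had : a * d = 1 := by linarith [hdet]
      have ha0 : a ≠ 0 := by rintro rfl; simp at had
      have hd : d = a⁻¹ := by field_simp; linarith [had]
      rcases lt_or_gt_of_ne ha0 with haneg | hapos
      · -- a < 0 : -A is the commutator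
        set μ : ℝ := Real.sqrt (-a) with hμ_def
        have hμ2 : μ ^ 2 = -a := Real.sq_sqrt (by linarith)
        have hμ0 : μ ≠ 0 := by
          intro h; rw [h] at hμ2; simp at hμ2; linarith
        refine ⟨⟨!![μ, 0; 0, μ⁻¹], by simp [Matrix.det_fin_two_of]; field_simp⟩,
          ⟨!![0, 1; -1, 0], by simp [Matrix.det_fin_two_of]⟩, Or.inr ?_⟩
        rw [hA]
        erw [Matrix.SpecialLinearGroup.coe_mul, Matrix.SpecialLinearGroup.coe_mul,
          Matrix.SpecialLinearGroup.coe_mul, Matrix.SpecialLinearGroup.coe_inv,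
          Matrix.SpecialLinearGroup.coe_inv]
        simp only [Matrix.adjugate_fin_two]
        ext i j
        fin_cases i <;> fin_cases j <;>
          simp [Matrix.mul_apply, Fin.sum_univ_two]
        · linear_combination hμ2
        · rw [hd]
          field_simp
          linear_combination hμ2
      · -- a > 0 : A is the commutator
        set μ : ℝ := Real.sqrt a with hμ_def
        have hμ2 : μ ^ 2 = a := Real.sq_sqrt (by linarith)
        have hμ0 : μ ≠ 0 := by
          intro h; rw [h] at hμ2; simp at hμ2; linarith
        refine ⟨⟨!![μ, 0; 0, μ⁻¹], by simp [Matrix.det_fin_two_of]; field_simp⟩,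
          ⟨!![0, 1; -1, 0], by simp [Matrix.det_fin_two_of]⟩, Or.inl ?_⟩
        rw [hA]
        erw [Matrix.SpecialLinearGroup.coe_mul, Matrix.SpecialLinearGroup.coe_mul,
          Matrix.SpecialLinearGroup.coe_mul, Matrix.SpecialLinearGroup.coe_inv,
          Matrix.SpecialLinearGroup.coe_inv]
        simp only [Matrix.adjugate_fin_two]
        ext i j
        fin_cases i <;> fin_cases j <;>
          simp [Matrix.mul_apply, Fin.sum_univ_two]
        · linear_combination - hμ2
        · rw [hd]
          field_simp
          linear_combination hμ2

end PSL2RAux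

end

/-- Every element of PSL(2,ℝ), the quotient of SL(2,ℝ) by its center,
is a commutator. -/
theorem psl2r_every_element_is_commutator
    (g : Matrix.SpecialLinearGroup (Fin 2) ℝ ⧸
      Subgroup.center (Matrix.SpecialLinearGroup (Fin 2) ℝ)) :
    ∃ a b : Matrix.SpecialLinearGroup (Fin 2) ℝ ⧸
      Subgroup.center (Matrix.SpecialLinearGroup (Fin 2) ℝ),
      g = a * b * a⁻¹ * b⁻¹ := by
  obtain ⟨A, rfl⟩ := QuotientGroup.mk_surjective g
  obtain ⟨X, Y, hXY | hXY⟩ := PSL2RAux.sl2r_commutator A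
  · refine ⟨QuotientGroup.mk X, QuotientGroup.mk Y, ?_⟩
    have hA : A = X * Y * X⁻¹ * Y⁻¹ := Subtype.ext hXY
    rw [hA]
    rfl
  · -- A = -(commutator); the sign dies in the quotient
    set negI : Matrix.SpecialLinearGroup (Fin 2) ℝ :=
      ⟨-1, by simp [Matrix.det_neg]⟩ with hnegI
    have hA : A = negI * (X * Y * X⁻¹ * Y⁻¹) := by
      apply Subtype.ext
      rw [Matrix.SpecialLinearGroup.coe_mul, hXY, hnegI]
      simp
    have hcen : negI ∈ Subgroup.center (Matrix.SpecialLinearGroup (Fin 2) ℝ) := by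
      rw [Subgroup.mem_center_iff]
      intro g
      apply Subtype.ext
      rw [Matrix.SpecialLinearGroup.coe_mul, Matrix.SpecialLinearGroup.coe_mul]
      simp [hnegI]
    refine ⟨QuotientGroup.mk X, QuotientGroup.mk Y, ?_⟩
    rw [hA]
    have : (QuotientGroup.mk negI :
        Matrix.SpecialLinearGroup (Fin 2) ℝ ⧸
          Subgroup.center (Matrix.SpecialLinearGroup (Fin 2) ℝ)) = 1 :=
      (QuotientGroup.eq_one_iff negI).mpr hcen
    calc (QuotientGroup.mk (negI * (X * Y * X⁻¹ * Y⁻¹)) :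
        Matrix.SpecialLinearGroup (Fin 2) ℝ ⧸
          Subgroup.center (Matrix.SpecialLinearGroup (Fin 2) ℝ))
        = QuotientGroup.mk negI * QuotientGroup.mk (X * Y * X⁻¹ * Y⁻¹) := rfl
      _ = QuotientGroup.mk (X * Y * X⁻¹ * Y⁻¹) := by rw [this, one_mul]
      _ = _ := rfl
end

section
/- The circle group ℝ/ℤ, considered as an abstract additive group, is isomorphic to the direct sum of ℚ/ℤ with a direct sum of copies of ℚ indexed by a set of cardinality continuum; concretely, there is an additive group isomorphism AddCircle (1:ℝ) ≃+ AddCircle (1:ℚ) × (ℝ →₀ ℚ). -/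
open Finsupp Cardinal

/-- The circle group ℝ/ℤ, as an abstract additive group, is isomorphic to the
direct sum of ℚ/ℤ with continuum many copies of ℚ. -/
theorem addCircle_iso_ratCircle_prod_finsupp :
    Nonempty (AddCircle (1 : ℝ) ≃+ (AddCircle (1 : ℚ) × (ℝ →₀ ℚ))) := by
  classical
  -- extend {1} to a ℚ-basis of ℝ
  have hli : LinearIndependent ℚ ((↑) : ({(1 : ℝ)} : Set ℝ) → ℝ) :=
    (linearIndepOn_singleton_iff (R := ℚ) (v := id)).mpr one_ne_zero
  set B : Set ℝ := LinearIndepOn.extend (K := ℚ) (v := id) (s := ({(1 : ℝ)} : Set ℝ)) hli (Set.subset_univ _) with hB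
  let bas : Module.Basis B ℚ ℝ := Module.Basis.extend (K := ℚ) (s := ({(1 : ℝ)} : Set ℝ)) hli
  have h1B : (1 : ℝ) ∈ B := LinearIndepOn.subset_extend (K := ℚ) (v := id) (s := ({(1 : ℝ)} : Set ℝ)) hli _ rfl
  let b₁ : B := ⟨1, h1B⟩
  have hb₁ : bas b₁ = 1 := Module.Basis.extend_apply_self (K := ℚ) (s := ({(1 : ℝ)} : Set ℝ)) hli b₁
  let e : ℝ ≃ₗ[ℚ] (B →₀ ℚ) := bas.repr
  have he1 : e 1 = Finsupp.single b₁ 1 := by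
    rw [← hb₁]; exact bas.repr_self b₁
  set ι := {x : B // x ≠ b₁} with hι
  -- the homomorphism ℝ →+ ℚ/ℤ × (ι →₀ ℚ)
  let f : ℝ →+ AddCircle (1 : ℚ) × (ι →₀ ℚ) :=
  { toFun := fun x => (((e x) b₁ : ℚ), (e x).subtypeDomain (· ≠ b₁))
    map_zero' := by simp
    map_add' := fun x y => by
      simp [Prod.ext_iff, Finsupp.subtypeDomain_add, QuotientAddGroup.mk_add] }
  have hker : AddSubgroup.zmultiples (1 : ℝ) = f.ker := by
    ext x
    constructor
    · rintro ⟨n, rfl⟩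
      have hex : e (n • (1 : ℝ)) = Finsupp.single b₁ (n : ℚ) := by
        rw [map_zsmul, he1]
        ext c
        simp [Finsupp.smul_single]
      refine AddMonoidHom.mem_ker.mpr ?_
      simp only [f, AddMonoidHom.coe_mk, ZeroHom.coe_mk, hex, Prod.mk_eq_zero]
      constructor
      · rw [Finsupp.single_eq_same]
        rw [AddCircle.coe_eq_zero_iff]
        exact ⟨n, by simp⟩
      · ext j
        exact Finsupp.single_eq_of_ne' (fun h => j.2 h.symm)
    · intro hx
      have hx' := AddMonoidHom.mem_ker.mp hx
      simp only [f, AddMonoidHom.coe_mk, ZeroHom.coe_mk, Prod.mk_eq_zero] at hx'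
      obtain ⟨h1, h2⟩ := hx'
      rw [AddCircle.coe_eq_zero_iff] at h1
      obtain ⟨n, hn⟩ := h1
      refine ⟨n, ?_⟩
      have hex : e x = Finsupp.single b₁ (n : ℚ) := by
        ext c
        by_cases hc : c = b₁
        · subst hc
          rw [Finsupp.single_eq_same, ← hn]; simp
        · have := DFunLike.congr_fun h2 (⟨c, hc⟩ : ι)
          rw [Finsupp.single_eq_of_ne' (Ne.symm hc)]; exact this
      have : e (n • (1 : ℝ)) = e x := by
        rw [map_zsmul, he1, hex]
        ext c; simp [Finsupp.smul_single]
      exact e.injective this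
  have hsurj : Function.Surjective f := by
    rintro ⟨p, g⟩
    obtain ⟨q, rfl⟩ := QuotientAddGroup.mk_surjective p
    set emb : ι ↪ B := Function.Embedding.subtype _
    refine ⟨e.symm (Finsupp.single b₁ q + g.embDomain emb), ?_⟩
    have hb₁nr : b₁ ∉ Set.range emb := by
      rintro ⟨j, hj⟩; exact j.2 hj
    simp only [f, AddMonoidHom.coe_mk, ZeroHom.coe_mk, LinearEquiv.apply_symm_apply]
    refine Prod.ext ?_ ?_
    · simp only [Finsupp.add_apply, Finsupp.single_eq_same,
        Finsupp.embDomain_notin_range _ _ _ hb₁nr, add_zero]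
    · rw [Finsupp.subtypeDomain_add]
      ext j
      have h1 : (Finsupp.single b₁ q).subtypeDomain (· ≠ b₁) j = 0 :=
        Finsupp.single_eq_of_ne' (fun h => j.2 h.symm)
      have h2 : (g.embDomain emb).subtypeDomain (· ≠ b₁) j = g j := by
        simp only [Finsupp.subtypeDomain_apply]
        exact Finsupp.embDomain_apply_self emb g j
      simp [h1, h2]
  -- cardinality: ι ≃ ℝ
  have hBcard : #B = Cardinal.continuum := by
    rw [bas.mk_eq_rank'', Real.rank_rat_real]
  have hBinf : Infinite B := by
    rw [Cardinal.infinite_iff, hBcard]; exact Cardinal.aleph0_le_continuum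
  have hιcard : #ι = #ℝ := by
    have : #ι = #(↥({b₁}ᶜ : Set B)) := by
      apply Cardinal.mk_congr
      exact Equiv.subtypeEquivRight (fun x => by simp)
    rw [this, Cardinal.mk_compl_of_infinite, hBcard, Cardinal.mk_real]
    rw [hBcard, Cardinal.mk_singleton]
    exact Cardinal.one_lt_aleph0.trans_le Cardinal.aleph0_le_continuum
  obtain ⟨eι⟩ := Cardinal.eq.mp hιcard
  -- assemble
  refine ⟨?_⟩
  have equiv1 : AddCircle (1 : ℝ) ≃+ (AddCircle (1 : ℚ) × (ι →₀ ℚ)) :=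
    (QuotientAddGroup.quotientAddEquivOfEq hker).trans
      (QuotientAddGroup.quotientKerEquivOfSurjective f hsurj)
  exact equiv1.trans ((AddEquiv.refl _).prodCongr (Finsupp.domCongr eι))
end

section
/- Every homogeneous quasimorphism on a uniformly perfect group vanishes identically: let G be a group and N a natural number such that every element of G can be written as a product of at most N commutators, and let f : G → ℝ satisfy (i) there is a constant D ≥ 0 with |f(g*h) − f(g) − f(h)| ≤ D for all g, h ∈ G, and (ii) f(g^n) = n * f(g) for all g ∈ G and all natural numbers n. Then f(g) = 0 for every g ∈ G. -/
open scoped commutatorElement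

/-- Every homogeneous quasimorphism on a uniformly perfect group vanishes
identically. -/
theorem homogeneous_quasimorphism_vanishes_on_uniformly_perfect_group
    {G : Type*} [Group G] (N : ℕ)
    (hperf : ∀ g : G, ∃ l : List (G × G), l.length ≤ N ∧
      g = (l.map fun p => ⁅p.1, p.2⁆).prod)
    (f : G → ℝ) (D : ℝ) (hD : 0 ≤ D)
    (hquasi : ∀ g h : G, |f (g * h) - f g - f h| ≤ D)
    (hhom : ∀ (g : G) (n : ℕ), f (g ^ n) = n * f g) :
    ∀ g : G, f g = 0 := by
  -- f 1 = 0
  have h1 : f 1 = 0 := by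
    have := hhom 1 0
    simpa using this
  -- |f g + f g⁻¹| ≤ D
  have hinv : ∀ g : G, |f g + f g⁻¹| ≤ D := by
    intro g
    have := hquasi g g⁻¹
    simp only [mul_inv_cancel, h1] at this
    calc |f g + f g⁻¹| = |0 - f g - f g⁻¹| := by
          rw [show f g + f g⁻¹ = -(0 - f g - f g⁻¹) by ring, abs_neg]
    _ ≤ D := this
  -- commutator bound
  have hcomm : ∀ a b : G, |f ⁅a, b⁆| ≤ 5 * D := by
    intro a b
    have h1' := hquasi a b
    have h2 := hquasi (a * b) a⁻¹
    have h3 := hquasi (a * b * a⁻¹) b⁻¹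
    have h4 := hinv a
    have h5 := hinv b
    have : ⁅a, b⁆ = a * b * a⁻¹ * b⁻¹ := rfl
    rw [this]
    have := abs_add_le (f (a * b * a⁻¹ * b⁻¹) - f (a * b * a⁻¹) - f b⁻¹)
      (f (a * b * a⁻¹) - f (a * b) - f a⁻¹)
    have habs : ∀ x : ℝ, x ≤ |x| := fun x => le_abs_self x
    have hnabs : ∀ x : ℝ, -x ≤ |x| := fun x => neg_le_abs x
    calc |f (a * b * a⁻¹ * b⁻¹)|
        = |(f (a * b * a⁻¹ * b⁻¹) - f (a * b * a⁻¹) - f b⁻¹)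
          + (f (a * b * a⁻¹) - f (a * b) - f a⁻¹)
          + (f (a * b) - f a - f b)
          + (f a + f a⁻¹) + (f b + f b⁻¹)| := by ring_nf
      _ ≤ |(f (a * b * a⁻¹ * b⁻¹) - f (a * b * a⁻¹) - f b⁻¹)
          + (f (a * b * a⁻¹) - f (a * b) - f a⁻¹)
          + (f (a * b) - f a - f b)
          + (f a + f a⁻¹)| + |f b + f b⁻¹| := abs_add_le _ _
      _ ≤ (|(f (a * b * a⁻¹ * b⁻¹) - f (a * b * a⁻¹) - f b⁻¹)
          + (f (a * b * a⁻¹) - f (a * b) - f a⁻¹)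
          + (f (a * b) - f a - f b)| + |f a + f a⁻¹|) + |f b + f b⁻¹| := by
            gcongr <;> exact abs_add_le _ _
      _ ≤ ((|(f (a * b * a⁻¹ * b⁻¹) - f (a * b * a⁻¹) - f b⁻¹)
          + (f (a * b * a⁻¹) - f (a * b) - f a⁻¹)|
          + |f (a * b) - f a - f b|) + |f a + f a⁻¹|) + |f b + f b⁻¹| := by
            gcongr <;> exact abs_add_le _ _
      _ ≤ (((|f (a * b * a⁻¹ * b⁻¹) - f (a * b * a⁻¹) - f b⁻¹|
          + |f (a * b * a⁻¹) - f (a * b) - f a⁻¹|)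
          + |f (a * b) - f a - f b|) + |f a + f a⁻¹|) + |f b + f b⁻¹| := by
            gcongr <;> exact abs_add_le _ _
      _ ≤ (((D + D) + D) + D) + D := by gcongr
      _ = 5 * D := by ring
  -- bound on products of lists whose entries are bounded by C
  have hlist : ∀ (l : List G), (∀ x ∈ l, |f x| ≤ 5 * D) →
      |f l.prod| ≤ l.length * (5 * D) + l.length * D := by
    intro l
    induction l with
    | nil => intro _; simp [h1]
    | cons a t ih =>
      intro hmem
      have ht := ih (fun x hx => hmem x (List.mem_cons_of_mem a hx))
      have ha := hmem a List.mem_cons_self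
      have hq := hquasi a t.prod
      have : |f (a * t.prod)| ≤ |f (a * t.prod) - f a - f t.prod| + |f a| + |f t.prod| := by
        have := abs_add_le (f (a * t.prod) - f a - f t.prod) (f a)
        have := abs_add_le (f (a * t.prod) - f a - f t.prod + f a) (f t.prod)
        calc |f (a * t.prod)| = |(f (a * t.prod) - f a - f t.prod + f a) + f t.prod| := by
              ring_nf
          _ ≤ |f (a * t.prod) - f a - f t.prod + f a| + |f t.prod| := abs_add_le _ _
          _ ≤ (|f (a * t.prod) - f a - f t.prod| + |f a|) + |f t.prod| := by
              gcongr <;> exact abs_add_le _ _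
      simp only [List.prod_cons, List.length_cons]
      push_cast
      calc |f (a * t.prod)| ≤ |f (a * t.prod) - f a - f t.prod| + |f a| + |f t.prod| := this
        _ ≤ D + 5 * D + (t.length * (5 * D) + t.length * D) := by gcongr
        _ = (t.length + 1) * (5 * D) + (t.length + 1) * D := by ring
  -- uniform bound on f
  have hbound : ∀ g : G, |f g| ≤ N * (6 * D) := by
    intro g
    obtain ⟨l, hlen, hg⟩ := hperf g
    have hmem : ∀ x ∈ l.map fun p : G × G => ⁅p.1, p.2⁆, |f x| ≤ 5 * D := by
      intro x hx
      obtain ⟨p, _, rfl⟩ := List.mem_map.mp hx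
      exact hcomm p.1 p.2
    have := hlist _ hmem
    rw [List.length_map] at this
    rw [hg]
    calc |f (l.map fun p : G × G => ⁅p.1, p.2⁆).prod|
        ≤ l.length * (5 * D) + l.length * D := this
      _ = l.length * (6 * D) := by ring
      _ ≤ N * (6 * D) := by
          have : (l.length : ℝ) ≤ N := by exact_mod_cast hlen
          nlinarith
  -- conclude
  intro g
  by_contra hne
  have hpos : 0 < |f g| := abs_pos.mpr hne
  obtain ⟨n, hn⟩ := exists_nat_gt ((N * (6 * D)) / |f g|)
  have hb := hbound (g ^ n)
  rw [hhom g n, abs_mul, Nat.abs_cast] at hb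
  have : (N * (6 * D)) / |f g| < n := hn
  have := (div_lt_iff₀ hpos).mp this
  linarith
end

section
/- Poincaré's translation number is a quasimorphism of defect at most 1 on the monoid of degree-one monotone circle lifts: for all f, g : CircleDeg1Lift, one has |τ(f * g) − τ(f) − τ(g)| ≤ 1, where τ denotes the translation number. -/
open CircleDeg1Lift

/-- An integer translation commutes with every `CircleDeg1Lift`. -/
lemma commute_translate_int (g : CircleDeg1Lift) (m : ℤ) :
    Commute (↑(translate (Multiplicative.ofAdd (m : ℝ))) : CircleDeg1Lift) g := by
  ext x
  simp [mul_apply, translate_apply, g.map_int_add]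

lemma translationNumber_translate_int_mul (g : CircleDeg1Lift) (m : ℤ) :
    translationNumber ((↑(translate (Multiplicative.ofAdd (m : ℝ))) : CircleDeg1Lift) * g)
      = m + translationNumber g := by
  rw [translationNumber_mul_of_commute (commute_translate_int g m),
    translationNumber_translate]

/-- Poincaré's translation number is a quasimorphism of defect at most 1 on the
monoid of degree-one monotone circle lifts. -/
theorem translationNumber_quasimorphism_defect_le_one
    (f g : CircleDeg1Lift) :
    |CircleDeg1Lift.translationNumber (f * g) -
      CircleDeg1Lift.translationNumber f -
      CircleDeg1Lift.translationNumber g| ≤ 1 := by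
  set τ := CircleDeg1Lift.translationNumber with hτ
  have hub : τ (f * g) ≤ (⌊τ f⌋ + 1 : ℤ) + τ g := by
    rw [← translationNumber_translate_int_mul g (⌊τ f⌋ + 1)]
    refine translationNumber_mono fun x => ?_
    have := f.map_lt_of_translationNumber_lt_int
      (n := ⌊τ f⌋ + 1) (by exact_mod_cast Int.lt_floor_add_one (τ f)) (g x)
    calc (f * g) x = f (g x) := mul_apply f g x
      _ ≤ g x + (⌊τ f⌋ + 1 : ℤ) := this.le
      _ = _ := by
        rw [mul_apply, translate_apply]; push_cast; ring
  have hlb : (⌈τ f⌉ - 1 : ℤ) + τ g ≤ τ (f * g) := by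
    rw [← translationNumber_translate_int_mul g (⌈τ f⌉ - 1)]
    refine translationNumber_mono fun x => ?_
    have := f.lt_map_of_int_lt_translationNumber
      (n := ⌈τ f⌉ - 1) (by push_cast; linarith [Int.ceil_lt_add_one (τ f)]) (g x)
    calc (↑(translate (Multiplicative.ofAdd ((⌈τ f⌉ - 1 : ℤ) : ℝ))) * g) x
        = (⌈τ f⌉ - 1 : ℤ) + g x := by rw [mul_apply, translate_apply]
      _ ≤ f (g x) := by push_cast at this ⊢; linarith
      _ = (f * g) x := (mul_apply f g x).symm
  have h1 : (⌊τ f⌋ : ℝ) ≤ τ f := Int.floor_le _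
  have h2 : τ f ≤ (⌈τ f⌉ : ℝ) := Int.le_ceil _
  rw [abs_le]
  constructor <;> [skip; skip] <;> push_cast at hub hlb <;> linarith
end

section
/- If G is a uniformly perfect group, i.e. there is N : ℕ such that every element of G is a product of at most N commutators, then for any group homomorphism ρ : G →* CircleDeg1Liftˣ into the group of invertible degree-one monotone circle lifts, the translation number of ρ(g) is 0 for every g ∈ G. -/
open CircleDeg1Lift
open scoped commutatorElement

private theorem tau_mul_le' (f g : CircleDeg1Lift) :
    translationNumber (f * g) ≤ translationNumber f + translationNumber g + 2 := by
  apply translationNumber_le_of_le_add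
  intro x
  have h1 := f.map_lt_add_translationNumber_add_one (g x)
  have h2 := g.map_lt_add_translationNumber_add_one x
  have : (f * g) x = f (g x) := rfl
  rw [this]
  linarith

private theorem tau_comm_le' {G : Type*} [Group G] (ρ : G →* CircleDeg1Liftˣ) (a b : G) :
    translationNumber ((ρ ⁅a, b⁆ : CircleDeg1Liftˣ) : CircleDeg1Lift) ≤ 6 := by
  have hinv : ∀ g : G, translationNumber ((ρ g⁻¹ : CircleDeg1Liftˣ) : CircleDeg1Lift)
      = - translationNumber ((ρ g : CircleDeg1Liftˣ) : CircleDeg1Lift) := by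
    intro g
    rw [map_inv]
    exact translationNumber_units_inv (ρ g)
  have h : (ρ ⁅a, b⁆ : CircleDeg1Lift) =
      ((ρ a : CircleDeg1Lift) * (ρ b : CircleDeg1Lift)) *
      ((ρ a⁻¹ : CircleDeg1Lift) * (ρ b⁻¹ : CircleDeg1Lift)) := by
    simp [commutatorElement_def, mul_assoc]
  rw [h]
  have h1 := tau_mul_le' ((ρ a : CircleDeg1Lift) * (ρ b)) ((ρ a⁻¹ : CircleDeg1Lift) * (ρ b⁻¹))
  have h2 := tau_mul_le' (ρ a : CircleDeg1Lift) (ρ b)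
  have h3 := tau_mul_le' (ρ a⁻¹ : CircleDeg1Lift) (ρ b⁻¹)
  rw [hinv a, hinv b] at h3
  linarith

private theorem tau_prod_le' {G : Type*} [Group G] (ρ : G →* CircleDeg1Liftˣ) :
    ∀ l : List (G × G),
      translationNumber ((ρ ((l.map fun p => ⁅p.1, p.2⁆).prod) : CircleDeg1Liftˣ)
        : CircleDeg1Lift) ≤ 8 * l.length := by
  intro l
  induction l with
  | nil => simp [translationNumber_one]
  | cons p l ih =>
      have h : (ρ (((p :: l).map fun p => ⁅p.1, p.2⁆).prod) : CircleDeg1Lift) =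
          (ρ ⁅p.1, p.2⁆ : CircleDeg1Lift) *
          (ρ ((l.map fun p => ⁅p.1, p.2⁆).prod) : CircleDeg1Lift) := by
        simp
      rw [h]
      have h1 := tau_mul_le' (ρ ⁅p.1, p.2⁆ : CircleDeg1Lift)
        (ρ ((l.map fun p => ⁅p.1, p.2⁆).prod) : CircleDeg1Lift)
      have h2 := tau_comm_le' ρ p.1 p.2
      simp only [List.length_cons, Nat.cast_add, Nat.cast_one]
      push_cast
      linarith

private theorem tau_nonpos' {G : Type*} [Group G] (N : ℕ)
    (hperf : ∀ g : G, ∃ l : List (G × G), l.length ≤ N ∧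
      g = (l.map fun p => ⁅p.1, p.2⁆).prod)
    (ρ : G →* CircleDeg1Liftˣ) (g : G) :
    translationNumber ((ρ g : CircleDeg1Liftˣ) : CircleDeg1Lift) ≤ 0 := by
  by_contra hpos
  push_neg at hpos
  obtain ⟨n, hn⟩ := exists_nat_gt ((8 * N : ℝ) /
    translationNumber ((ρ g : CircleDeg1Liftˣ) : CircleDeg1Lift))
  have hlt : (8 * N : ℝ) < n * translationNumber ((ρ g : CircleDeg1Liftˣ) : CircleDeg1Lift) := by
    rw [div_lt_iff₀ hpos] at hn; linarith
  obtain ⟨l, hl, heq⟩ := hperf (g ^ n)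
  have hτ := tau_prod_le' ρ l
  rw [← heq] at hτ
  have hpow : (ρ (g ^ n) : CircleDeg1Lift) = ((ρ g : CircleDeg1Lift)) ^ n := by
    rw [map_pow]; rfl
  rw [hpow, translationNumber_pow] at hτ
  have : (8 * l.length : ℝ) ≤ 8 * N := by
    have := hl
    push_cast
    exact_mod_cast by
      have : (l.length : ℝ) ≤ N := by exact_mod_cast hl
      linarith
  linarith

/-- For any action of a uniformly perfect group by invertible degree-one
monotone circle lifts, every element has translation number zero. -/
theorem translationNumber_eq_zero_of_uniformly_perfect
    {G : Type*} [Group G] (N : ℕ)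
    (hperf : ∀ g : G, ∃ l : List (G × G), l.length ≤ N ∧
      g = (l.map fun p => ⁅p.1, p.2⁆).prod)
    (ρ : G →* CircleDeg1Liftˣ) :
    ∀ g : G, CircleDeg1Lift.translationNumber ((ρ g : CircleDeg1Liftˣ) : CircleDeg1Lift) = 0 := by
  intro g
  have h1 := tau_nonpos' N hperf ρ g
  have h2 := tau_nonpos' N hperf ρ g⁻¹
  rw [map_inv, translationNumber_units_inv] at h2
  linarith
end

section
/- (Ghys) Let G be a group such that (i) every element of G is a product of at most N commutators for some fixed N : ℕ, and (ii) the second group cohomology of G with coefficients in the trivial G-representation ℤ vanishes. Then every action of G on the circle ℝ/ℤ by orientation-preserving homeomorphisms has a global fixed point: for every group homomorphism ρ : G →* Homeomorph (AddCircle (1:ℝ)) (AddCircle (1:ℝ)) such that each ρ(g) preserves the betweenness relation btw of the circular order on AddCircle (1:ℝ), there exists a point x with (ρ g)(x) = x for all g ∈ G. -/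
open Set Function CircleDeg1Lift
open scoped commutatorElement

noncomputable section GhysAux

namespace Ghys


local instance ghysFact : Fact ((0:ℝ) < 1) := ⟨one_pos⟩

abbrev S1 := AddCircle (1:ℝ)

def rep (a : ℝ) (z : S1) : ℝ := (AddCircle.equivIco 1 a z : ℝ)

lemma rep_mem (a : ℝ) (z : S1) : rep a z ∈ Ico a (a+1) := (AddCircle.equivIco 1 a z).2

lemma coe_rep (a : ℝ) (z : S1) : ((rep a z : ℝ) : S1) = z :=
  (AddCircle.equivIco 1 a).left_inv z

lemma rep_coe (a x : ℝ) : rep a ((x : ℝ) : S1) = toIcoMod ghysFact.out a x := rfl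

lemma rep_eq_self_of_mem {a t : ℝ} (h : t ∈ Ico a (a+1)) : rep a ((t : ℝ) : S1) = t := by
  rw [rep_coe]; exact (toIcoMod_eq_self _).2 h

lemma coe_int_eq_zero (n : ℤ) : (((n : ℝ)) : S1) = 0 :=
  (AddCircle.coe_eq_zero_iff _).2 ⟨n, by simp⟩

lemma coe_add_int (x : ℝ) (n : ℤ) : ((x + n : ℝ) : S1) = (x : S1) := by
  rw [AddCircle.coe_add, coe_int_eq_zero, add_zero]

lemma coe_int_add (x : ℝ) (n : ℤ) : (((n : ℝ) + x : ℝ) : S1) = (x : S1) := by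
  rw [AddCircle.coe_add, coe_int_eq_zero, zero_add]

variable (f : S1 ≃ S1)

def y0 : ℝ := rep 0 (f 0)

lemma y0_mem : y0 f ∈ Ico (0:ℝ) 1 := by simpa [y0] using rep_mem 0 (f 0)

lemma coe_y0 : ((y0 f : ℝ) : S1) = f 0 := coe_rep _ _

def F (x : ℝ) : ℝ := rep (y0 f) (f ((Int.fract x : ℝ) : S1)) + ⌊x⌋

lemma coe_fract (x : ℝ) : ((Int.fract x : ℝ) : S1) = (x : S1) := by
  rw [Int.fract, sub_eq_add_neg, ← Int.cast_neg, coe_add_int]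

lemma coe_F (x : ℝ) : ((F f x : ℝ) : S1) = f ((x:ℝ) : S1) := by
  rw [F, coe_add_int, coe_rep, coe_fract]

lemma F_add_int (x : ℝ) (n : ℤ) : F f (x + n) = F f x + n := by
  rw [F, F, Int.fract_add_intCast, Int.floor_add_intCast]; push_cast; ring

lemma mono0 (hf : ∀ a b c : S1, btw a b c → btw (f a) (f b) (f c)) {x x' : ℝ} (hx : 0 ≤ x) (hxx' : x ≤ x') (hx' : x' < 1) :
    rep (y0 f) (f ((x:ℝ):S1)) ≤ rep (y0 f) (f ((x':ℝ):S1)) := by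
  rcases eq_or_lt_of_le hx with rfl|hx
  · have h0 : rep (y0 f) (f (((0:ℝ)):S1)) = y0 f := by
      have : (((0:ℝ)):S1) = (0:S1) := by norm_cast
      rw [this, ← coe_y0, rep_eq_self_of_mem ⟨le_refl _, by linarith⟩]
    rw [h0]; exact (rep_mem _ _).1
  · have hbtw : btw ((0:ℝ):S1) ((x:ℝ):S1) ((x':ℝ):S1) := by
      rw [QuotientAddGroup.btw_coe_iff]
      rw [(toIcoMod_eq_self _).2 ⟨hx.le, by linarith⟩,
        (toIocMod_eq_self _).2 ⟨lt_of_lt_of_le hx hxx', by linarith⟩]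
      exact hxx'
    have h2 := hf _ _ _ hbtw
    have hb : ((rep (y0 f) (f ((x:ℝ):S1)) : ℝ):S1) = f ((x:ℝ):S1) := coe_rep _ _
    have hc : ((rep (y0 f) (f ((x':ℝ):S1)) : ℝ):S1) = f ((x':ℝ):S1) := coe_rep _ _
    have h0 : ((y0 f : ℝ):S1) = f ((0:ℝ):S1) := by
      rw [coe_y0]; norm_cast
    rw [← hb, ← hc, ← h0, QuotientAddGroup.btw_coe_iff] at h2
    have hbm := rep_mem (y0 f) (f ((x:ℝ):S1))
    have hcm := rep_mem (y0 f) (f ((x':ℝ):S1))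
    rw [(toIcoMod_eq_self _).2 hbm] at h2
    by_cases hcy : rep (y0 f) (f ((x':ℝ):S1)) = y0 f
    · exfalso
      have hfe : f ((x':ℝ):S1) = f ((0:ℝ):S1) := by rw [← hc, hcy, h0]
      have hxx : ((x':ℝ):S1) = ((0:ℝ):S1) := f.injective hfe
      have hxz : ((x':ℝ):S1) = 0 := by rw [hxx]; norm_cast
      obtain ⟨n, hn⟩ := (AddCircle.coe_eq_zero_iff _).1 hxz
      have hnx : (n:ℝ) = x' := by simpa using hn
      have h1 : (0:ℝ) < (n:ℝ) := hnx ▸ lt_of_lt_of_le hx hxx'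
      have h2' : (n:ℝ) < 1 := hnx ▸ hx'
      have h1' : (0:ℤ) < n := by exact_mod_cast h1
      have h2'' : n < 1 := by exact_mod_cast h2'
      omega
    · rw [(toIocMod_eq_self _).2 ⟨lt_of_le_of_ne hcm.1 (Ne.symm hcy), by linarith [hcm.2]⟩] at h2
      exact h2

lemma F_monotone (hf : ∀ a b c : S1, btw a b c → btw (f a) (f b) (f c)) : Monotone (F f) := by
  intro x x' h
  have hm : ⌊x⌋ ≤ ⌊x'⌋ := Int.floor_le_floor h
  rcases eq_or_lt_of_le hm with heq|hlt
  · have hfr : Int.fract x ≤ Int.fract x' := by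
      rw [Int.fract, Int.fract, ← heq]; linarith
    have := mono0 f hf (Int.fract_nonneg x) hfr (Int.fract_lt_one x')
    rw [F, F, ← heq]; linarith
  · have h1 : F f x < y0 f + 1 + ⌊x⌋ := by
      rw [F]; have := (rep_mem (y0 f) (f ((Int.fract x : ℝ):S1))).2; linarith
    have h2 : y0 f + ⌊x'⌋ ≤ F f x' := by
      rw [F]; have := (rep_mem (y0 f) (f ((Int.fract x' : ℝ):S1))).1; linarith
    have h3 : (⌊x⌋:ℝ) + 1 ≤ ⌊x'⌋ := by exact_mod_cast hlt
    linarith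

lemma F_injective : Injective (F f) := by
  intro x x' h
  have hbx := rep_mem (y0 f) (f ((Int.fract x : ℝ):S1))
  have hbx' := rep_mem (y0 f) (f ((Int.fract x' : ℝ):S1))
  rw [F, F] at h
  have hfl : ⌊x⌋ = ⌊x'⌋ := by
    have h1 : ((⌊x⌋:ℝ)) - ⌊x'⌋ < 1 := by linarith [hbx.1, hbx.2, hbx'.1, hbx'.2]
    have h2 : (-1:ℝ) < ((⌊x⌋:ℝ)) - ⌊x'⌋ := by linarith [hbx.1, hbx.2, hbx'.1, hbx'.2]
    have h1' : ⌊x⌋ - ⌊x'⌋ < 1 := by exact_mod_cast h1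
    have h2' : -1 < ⌊x⌋ - ⌊x'⌋ := by exact_mod_cast h2
    omega
  rw [hfl] at h
  have hrep : rep (y0 f) (f ((Int.fract x : ℝ):S1)) = rep (y0 f) (f ((Int.fract x' : ℝ):S1)) := by
    linarith
  have hco := congrArg (fun t : ℝ => ((t:ℝ):S1)) hrep
  simp only [coe_rep] at hco
  have hq := f.injective hco
  have hfr : Int.fract x = Int.fract x' := by
    refine (AddCircle.coe_eq_coe_iff_of_mem_Ico (a := 0) ?_ ?_).1 hq
    · simpa using Int.fract_lt_one x
    · simpa using Int.fract_lt_one x'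
  have e1 : x = Int.fract x + ⌊x⌋ := by rw [Int.fract]; ring
  have e2 : x' = Int.fract x' + ⌊x'⌋ := by rw [Int.fract]; ring
  rw [e1, e2, hfr, hfl]

lemma F_surjective : Surjective (F f) := by
  intro y
  set n := ⌊y - y0 f⌋ with hn
  set w := rep 0 (f.symm ((y:ℝ):S1)) with hwdef
  have hw : w ∈ Ico (0:ℝ) 1 := by simpa using rep_mem 0 (f.symm ((y:ℝ):S1))
  refine ⟨w + n, ?_⟩
  rw [F_add_int]
  have hfw : Int.fract w = w := Int.fract_eq_self.2 ⟨hw.1, hw.2⟩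
  have hflw : ⌊w⌋ = 0 := Int.floor_eq_zero_iff.2 (by simpa using hw)
  rw [F, hfw, hflw]
  have hcw : f ((w:ℝ):S1) = ((y:ℝ):S1) := by
    rw [hwdef, coe_rep]; exact f.apply_symm_apply _
  rw [hcw]
  have hyn : ((y - n : ℝ):S1) = ((y:ℝ):S1) := by
    rw [sub_eq_add_neg, ← Int.cast_neg, coe_add_int]
  have hmem : y - (n:ℝ) ∈ Ico (y0 f) (y0 f + 1) := by
    constructor
    · have := Int.floor_le (y - y0 f); rw [← hn] at this; linarith
    · have := Int.lt_floor_add_one (y - y0 f); rw [← hn] at this; linarith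
  rw [← hyn, rep_eq_self_of_mem hmem]
  push_cast; ring

def lift (hf : ∀ a b c : S1, btw a b c → btw (f a) (f b) (f c)) : CircleDeg1Lift :=
  ⟨⟨F f, F_monotone f hf⟩, fun x => by
    have := F_add_int f x 1; push_cast at this; simpa using this⟩

lemma lift_coe (hf : ∀ a b c : S1, btw a b c → btw (f a) (f b) (f c)) : ⇑(lift f hf) = F f := rfl

lemma lift_isUnit (hf : ∀ a b c : S1, btw a b c → btw (f a) (f b) (f c)) : IsUnit (lift f hf) :=
  CircleDeg1Lift.isUnit_iff_bijective.2 ⟨F_injective f, F_surjective f⟩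

def liftUnit (hf : ∀ a b c : S1, btw a b c → btw (f a) (f b) (f c)) : CircleDeg1Liftˣ := (lift_isUnit f hf).unit

lemma coe_liftUnit (hf : ∀ a b c : S1, btw a b c → btw (f a) (f b) (f c)) : ((liftUnit f hf : CircleDeg1Liftˣ) : CircleDeg1Lift) = lift f hf :=
  IsUnit.unit_spec _



lemma no_half_int (k m : ℤ) (h : (k:ℝ) = m + 1/2) : False := by
  have : ((2*k : ℤ) : ℝ) = ((2*m+1 : ℤ) : ℝ) := by push_cast; linarith
  have := Int.cast_injective this
  omega

lemma exists_translate (d : CircleDeg1Liftˣ)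
    (hd : ∀ x : ℝ, (((d : CircleDeg1Lift) x : ℝ) : S1) = ((x:ℝ):S1)) :
    ∃ n : ℤ, ∀ x : ℝ, (d : CircleDeg1Lift) x = x + n := by
  have hint : ∀ x : ℝ, ∃ n : ℤ, (d : CircleDeg1Lift) x - x = n := by
    intro x
    have h2 := (QuotientAddGroup.eq_iff_sub_mem).1 (hd x)
    obtain ⟨n, hn⟩ := AddSubgroup.mem_zmultiples_iff.1 h2
    exact ⟨n, by simpa using hn.symm⟩
  have hsurj : Surjective (d : CircleDeg1Lift) :=
    (CircleDeg1Lift.isUnit_iff_bijective.1 ⟨d, rfl⟩).2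
  have hcont : Continuous (d : CircleDeg1Lift) :=
    (CircleDeg1Lift.continuous_iff_surjective _).2 hsurj
  have hg : Continuous fun t : ℝ => (d : CircleDeg1Lift) t - t := by
    exact hcont.sub continuous_id
  obtain ⟨n, hn⟩ := hint 0
  refine ⟨n, fun x => ?_⟩
  obtain ⟨m, hm⟩ := hint x
  have hmn : m = n := by
    by_contra hne
    rcases lt_or_gt_of_ne hne with h|h
    · have hle : (m:ℝ) + 1 ≤ n := by exact_mod_cast h
      have hc : ((m:ℝ) + 1/2) ∈ Icc ((fun t : ℝ => (d : CircleDeg1Lift) t - t) x)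
          ((fun t : ℝ => (d : CircleDeg1Lift) t - t) 0) := by
        simp only [hm, hn]
        exact ⟨by linarith, by linarith⟩
      obtain ⟨t, ht⟩ := intermediate_value_univ x 0 hg hc
      obtain ⟨k, hk⟩ := hint t
      exact no_half_int k m (by rw [← hk]; exact ht)
    · have hle : (n:ℝ) + 1 ≤ m := by exact_mod_cast h
      have hc : ((n:ℝ) + 1/2) ∈ Icc ((fun t : ℝ => (d : CircleDeg1Lift) t - t) 0)
          ((fun t : ℝ => (d : CircleDeg1Lift) t - t) x) := by
        simp only [hm, hn]
        exact ⟨by linarith, by linarith⟩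
      obtain ⟨t, ht⟩ := intermediate_value_univ 0 x hg hc
      obtain ⟨k, hk⟩ := hint t
      exact no_half_int k n (by rw [← hk]; exact ht)
  rw [hmn] at hm
  linarith

lemma quasi (u v : CircleDeg1Lift) :
    |translationNumber (u*v) - translationNumber u - translationNumber v| ≤ 4 := by
  have h1 := CircleDeg1Lift.dist_map_zero_translationNumber_le (u*v)
  have h2 := CircleDeg1Lift.dist_map_zero_translationNumber_le u
  have h3 := CircleDeg1Lift.dist_map_zero_translationNumber_le v
  have h4 := CircleDeg1Lift.dist_map_map_zero_lt u v
  rw [Real.dist_eq] at h1 h2 h3 h4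
  have hmul : (u*v) 0 = u (v 0) := rfl
  rw [hmul] at h1
  have e1 := abs_le.1 h1
  have e2 := abs_le.1 h2
  have e3 := abs_le.1 h3
  have e4 := abs_lt.1 h4
  rw [abs_le]
  constructor <;> [skip; skip] <;>
    [ (nlinarith [e1.1, e1.2, e2.1, e2.2, e3.1, e3.2, e4.1, e4.2]);
      (nlinarith [e1.1, e1.2, e2.1, e2.2, e3.1, e3.2, e4.1, e4.2])]

lemma exists_coboundary {G : Type} [Group G]
    (hH2 : Subsingleton (groupCohomology (Rep.trivial ℤ G ℤ) 2))
    (c : G → G → ℤ) (hc : ∀ g h j : G, c h j - c (g*h) j + c g (h*j) - c g h = 0) :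
    ∃ b : G → ℤ, ∀ g h : G, c g h = b h - b (g*h) + b g := by
  set A := Rep.trivial ℤ G ℤ with hA
  have hz : (fun p : G × G => (c p.1 p.2 : A)) ∈ groupCohomology.cocycles₂ A := by
    rw [groupCohomology.mem_cocycles₂_def]
    intro g h j
    have htriv : A.ρ g ((c h j : A)) = (c h j : A) := Rep.trivial_ρ_apply g _
    rw [htriv]
    exact_mod_cast hc g h j
  have hsub : Subsingleton (groupCohomology.H2 A) := by
    exact hH2
  set z : groupCohomology.cocycles₂ A := ⟨_, hz⟩ with hzdef
  have hz0 : (z : G × G → A) ∈ groupCohomology.coboundaries₂ A := by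
    have h0 : (groupCohomology.H2π A z) = 0 := Subsingleton.elim _ _
    exact (groupCohomology.H2π_eq_zero_iff z).1 h0
  obtain ⟨x, hx⟩ := hz0
  refine ⟨fun g => (x g : ℤ), fun g h => ?_⟩
  have hgh : A.ρ g (x h) - x (g*h) + x g = (c g h : A) := congrFun hx (g, h)
  have htriv : A.ρ g (x h) = x h := Rep.trivial_ρ_apply g _
  rw [htriv] at hgh
  exact_mod_cast hgh.symm


variable {G : Type} [Group G] (L : G →* CircleDeg1Liftˣ)


noncomputable def phi (g : G) : ℝ := translationNumber ((L g : CircleDeg1Liftˣ) : CircleDeg1Lift)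

lemma phi_mul (g h : G) : |phi L (g*h) - phi L g - phi L h| ≤ 4 := by
  have e : ((L (g*h) : CircleDeg1Liftˣ) : CircleDeg1Lift)
      = ((L g : CircleDeg1Liftˣ) : CircleDeg1Lift) * ((L h : CircleDeg1Liftˣ) : CircleDeg1Lift) := by
    rw [map_mul, Units.val_mul]
  simp only [phi, e]
  exact quasi _ _

lemma phi_inv (g : G) : phi L g⁻¹ = - phi L g := by
  simp only [phi, map_inv]
  exact translationNumber_units_inv (L g)

lemma phi_one : phi L 1 = 0 := by
  simp only [phi, map_one, Units.val_one]
  exact translationNumber_one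

lemma phi_pow (g : G) (n : ℕ) : phi L (g^n) = n * phi L g := by
  simp only [phi, map_pow, Units.val_pow_eq_pow_val]
  exact translationNumber_pow _ _

lemma phi_comm (a b : G) : |phi L ⁅a,b⁆| ≤ 12 := by
  have h1 := phi_mul L a b
  have h2 := phi_mul L (a*b) a⁻¹
  have h3 := phi_mul L ((a*b)*a⁻¹) b⁻¹
  rw [phi_inv] at h2 h3
  have e : ⁅a,b⁆ = ((a*b)*a⁻¹)*b⁻¹ := by
    rw [commutatorElement_def]
  rw [e]
  have e1 := abs_le.1 h1
  have e2 := abs_le.1 h2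
  have e3 := abs_le.1 h3
  rw [abs_le]
  constructor <;> linarith [e1.1, e1.2, e2.1, e2.2, e3.1, e3.2]

lemma phi_list (l : List (G × G)) :
    |phi L ((l.map fun p => ⁅p.1, p.2⁆).prod)| ≤ 16 * l.length := by
  induction l with
  | nil => simp [phi_one]
  | cons p l ih =>
    rw [List.map_cons, List.prod_cons]
    have h1 := phi_mul L ⁅p.1, p.2⁆ ((l.map fun p => ⁅p.1, p.2⁆).prod)
    have h2 := phi_comm L p.1 p.2
    have e1 := abs_le.1 h1
    have e2 := abs_le.1 h2
    have e3 := abs_le.1 ih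
    rw [List.length_cons, abs_le]
    push_cast
    constructor <;> linarith [e1.1, e1.2, e2.1, e2.2, e3.1, e3.2]

lemma phi_zero (N : ℕ)
    (hperf : ∀ g : G, ∃ l : List (G × G), l.length ≤ N ∧
      g = (l.map fun p => ⁅p.1, p.2⁆).prod) (g : G) : phi L g = 0 := by
  have hbound : ∀ g : G, |phi L g| ≤ 16 * N := by
    intro g
    obtain ⟨l, hl, rfl⟩ := hperf g
    calc |phi L ((l.map fun p => ⁅p.1, p.2⁆).prod)| ≤ 16 * l.length := phi_list L l
    _ ≤ 16 * N := by
        have : (l.length : ℝ) ≤ N := by exact_mod_cast hl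
        linarith
  by_contra h
  have hg : 0 < |phi L g| := abs_pos.2 h
  obtain ⟨n, hn⟩ := exists_nat_gt ((16 * N) / |phi L g|)
  have h2 : (n:ℝ) * |phi L g| ≤ 16 * N := by
    have := hbound (g^n)
    rw [phi_pow, abs_mul, Nat.abs_cast] at this
    exact this
  rw [div_lt_iff₀ hg] at hn
  linarith


end Ghys

end GhysAux
/-- The group of self-homeomorphisms of a topological space, under composition. -/
instance homeomorphGroup {X : Type*} [TopologicalSpace X] : Group (X ≃ₜ X) where
  mul f g := g.trans f
  one := Homeomorph.refl X
  inv := Homeomorph.symm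
  mul_assoc f g h := Homeomorph.ext fun _ => rfl
  one_mul f := Homeomorph.ext fun _ => rfl
  mul_one f := Homeomorph.ext fun _ => rfl
  inv_mul_cancel f := Homeomorph.ext fun x => f.symm_apply_apply x

open scoped commutatorElement

open Ghys CircleDeg1Lift

/-- (Ghys) If a group is uniformly perfect and has vanishing second group
cohomology with trivial ℤ coefficients, then every action of it on the circle
ℝ/ℤ by orientation-preserving homeomorphisms has a global fixed point. -/
theorem ghys_fixed_point_of_uniformly_perfect_and_H2_trivial
    (G : Type) [Group G] (N : ℕ)
    (hperf : ∀ g : G, ∃ l : List (G × G), l.length ≤ N ∧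
      g = (l.map fun p => ⁅p.1, p.2⁆).prod)
    (hH2 : Subsingleton (groupCohomology (Rep.trivial ℤ G ℤ) 2))
    (ρ : G →* Homeomorph (AddCircle (1 : ℝ)) (AddCircle (1 : ℝ)))
    (hpos : ∀ (g : G) (a b c : AddCircle (1 : ℝ)),
      btw a b c → btw (ρ g a) (ρ g b) (ρ g c)) :
    ∃ x : AddCircle (1 : ℝ), ∀ g : G, ρ g x = x := by
  classical
  -- lifts of each ρ g
  let ℓ : G → CircleDeg1Liftˣ := fun g =>
    liftUnit (ρ g).toEquiv (fun a b c h => hpos g a b c h)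
  have hproj : ∀ (g : G) (x : ℝ),
      ((((ℓ g : CircleDeg1Liftˣ) : CircleDeg1Lift) x : ℝ) : S1) = ρ g ((x : ℝ) : S1) := by
    intro g x
    show (((((liftUnit (ρ g).toEquiv (fun a b c h => hpos g a b c h) :
        CircleDeg1Liftˣ) : CircleDeg1Lift)) x : ℝ) : S1) = _
    rw [coe_liftUnit, lift_coe]
    exact coe_F (ρ g).toEquiv x
  have happmul : ∀ (g h : G) (z : S1), ρ (g * h) z = ρ g (ρ h z) := by
    intro g h z
    rw [map_mul]
    rfl
  -- comparison cocycle
  have hd : ∀ g h : G, ∃ n : ℤ, ∀ x : ℝ,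
      ((ℓ g : CircleDeg1Liftˣ) : CircleDeg1Lift) (((ℓ h : CircleDeg1Liftˣ) : CircleDeg1Lift) x)
        = ((ℓ (g*h) : CircleDeg1Liftˣ) : CircleDeg1Lift) x + n := by
    intro g h
    obtain ⟨n, hn⟩ := exists_translate ((ℓ (g*h))⁻¹ * (ℓ g * ℓ h)) (by
      intro x
      have e1 : (((((ℓ (g*h))⁻¹ * (ℓ g * ℓ h) : CircleDeg1Liftˣ) : CircleDeg1Lift)) x)
          = (((ℓ (g*h))⁻¹ : CircleDeg1Liftˣ) : CircleDeg1Lift)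
            (((ℓ g : CircleDeg1Liftˣ) : CircleDeg1Lift)
              (((ℓ h : CircleDeg1Liftˣ) : CircleDeg1Lift) x)) := by
        rw [Units.val_mul, Units.val_mul, mul_apply, mul_apply]
      rw [e1]
      -- project
      apply (ρ (g*h)).toEquiv.injective
      show ρ (g*h) _ = ρ (g*h) _
      rw [← hproj (g*h)]
      have e2 : ((ℓ (g*h) : CircleDeg1Liftˣ) : CircleDeg1Lift)
          ((((ℓ (g*h))⁻¹ : CircleDeg1Liftˣ) : CircleDeg1Lift)
            (((ℓ g : CircleDeg1Liftˣ) : CircleDeg1Lift)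
              (((ℓ h : CircleDeg1Liftˣ) : CircleDeg1Lift) x)))
          = (((ℓ g : CircleDeg1Liftˣ) : CircleDeg1Lift)
              (((ℓ h : CircleDeg1Liftˣ) : CircleDeg1Lift) x)) :=
        units_apply_inv_apply (ℓ (g*h)) _
      rw [e2, hproj g, hproj h, happmul])
    exact ⟨n, fun x => by
      have h1 := hn x
      have e1 : (((((ℓ (g*h))⁻¹ * (ℓ g * ℓ h) : CircleDeg1Liftˣ) : CircleDeg1Lift)) x)
          = (((ℓ (g*h))⁻¹ : CircleDeg1Liftˣ) : CircleDeg1Lift)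
            (((ℓ g : CircleDeg1Liftˣ) : CircleDeg1Lift)
              (((ℓ h : CircleDeg1Liftˣ) : CircleDeg1Lift) x)) := by
        rw [Units.val_mul, Units.val_mul, mul_apply, mul_apply]
      rw [e1] at h1
      have h2 := congrArg ((ℓ (g*h) : CircleDeg1Liftˣ) : CircleDeg1Lift) h1
      rw [units_apply_inv_apply (ℓ (g*h))] at h2
      rw [h2, map_add_int]⟩
  choose cc hcc using hd
  -- cocycle identity
  have hcocycle : ∀ g h j : G, cc h j - cc (g*h) j + cc g (h*j) - cc g h = 0 := by
    intro g h j
    have E1 : ((ℓ g : CircleDeg1Liftˣ) : CircleDeg1Lift)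
        (((ℓ h : CircleDeg1Liftˣ) : CircleDeg1Lift)
          (((ℓ j : CircleDeg1Liftˣ) : CircleDeg1Lift) 0))
        = ((ℓ (g*(h*j)) : CircleDeg1Liftˣ) : CircleDeg1Lift) 0 + cc g (h*j) + cc h j := by
      rw [hcc h j 0, map_add_int, hcc g (h*j) 0]
    have E2 : ((ℓ g : CircleDeg1Liftˣ) : CircleDeg1Lift)
        (((ℓ h : CircleDeg1Liftˣ) : CircleDeg1Lift)
          (((ℓ j : CircleDeg1Liftˣ) : CircleDeg1Lift) 0))
        = ((ℓ ((g*h)*j) : CircleDeg1Liftˣ) : CircleDeg1Lift) 0 + cc (g*h) j + cc g h := by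
      rw [hcc g h _, hcc (g*h) j 0]
    rw [mul_assoc] at E2
    have := E1.symm.trans E2
    have h2 : (cc g (h*j) : ℝ) + cc h j = cc (g*h) j + cc g h := by linarith
    have h3 : cc g (h*j) + cc h j = cc (g*h) j + cc g h := by exact_mod_cast h2
    omega
  obtain ⟨b, hb⟩ := exists_coboundary hH2 cc hcocycle
  -- corrected lifts
  let T : ℤ → CircleDeg1Liftˣ := fun n => translate (Multiplicative.ofAdd (n : ℝ))
  let L : G → CircleDeg1Liftˣ := fun g => ℓ g * (T (b g))⁻¹
  have hL_apply : ∀ (k : G) (x : ℝ), ((L k : CircleDeg1Liftˣ) : CircleDeg1Lift) x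
      = ((ℓ k : CircleDeg1Liftˣ) : CircleDeg1Lift) (((-(b k) : ℤ) : ℝ) + x) := by
    intro k x
    show ((((ℓ k * (T (b k))⁻¹ : CircleDeg1Liftˣ)) : CircleDeg1Lift)) x = _
    rw [Units.val_mul, mul_apply]
    congr 1
    have : (((T (b k))⁻¹ : CircleDeg1Liftˣ) : CircleDeg1Lift) x = -((b k : ℤ) : ℝ) + x :=
      translate_inv_apply _ _
    rw [this]
    push_cast; ring
  have hLmul : ∀ g h : G, L (g*h) = L g * L h := by
    intro g h
    refine Units.ext (CircleDeg1Lift.ext fun x => ?_)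
    have rhs : ((L g * L h : CircleDeg1Liftˣ) : CircleDeg1Lift) x
        = ((L g : CircleDeg1Liftˣ) : CircleDeg1Lift)
          (((L h : CircleDeg1Liftˣ) : CircleDeg1Lift) x) := by
      rw [Units.val_mul (L g) (L h),
        mul_apply ((L g : CircleDeg1Liftˣ) : CircleDeg1Lift)
          ((L h : CircleDeg1Liftˣ) : CircleDeg1Lift) x]
    rw [rhs, hL_apply (g*h) x, hL_apply h x, hL_apply g]
    rw [map_int_add ((ℓ (g*h) : CircleDeg1Liftˣ) : CircleDeg1Lift) (-(b (g*h))) x]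
    rw [map_int_add ((ℓ h : CircleDeg1Liftˣ) : CircleDeg1Lift) (-(b h)) x]
    rw [show ((-(b g) : ℤ) : ℝ) + (((-(b h) : ℤ) : ℝ)
        + ((ℓ h : CircleDeg1Liftˣ) : CircleDeg1Lift) x)
      = ((-(b g) + -(b h) : ℤ) : ℝ) + ((ℓ h : CircleDeg1Liftˣ) : CircleDeg1Lift) x by
        push_cast; ring]
    rw [map_int_add ((ℓ g : CircleDeg1Liftˣ) : CircleDeg1Lift) (-(b g) + -(b h))
      (((ℓ h : CircleDeg1Liftˣ) : CircleDeg1Lift) x)]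
    rw [hcc g h x]
    have hbr : (cc g h : ℝ) = b h - b (g*h) + b g := by exact_mod_cast hb g h
    push_cast
    linarith
  let Lhom : G →* CircleDeg1Liftˣ := MonoidHom.mk' L hLmul
  have htau : ∀ g : G, translationNumber ((L g : CircleDeg1Liftˣ) : CircleDeg1Lift) = 0 := by
    intro g
    exact phi_zero Lhom N hperf g
  have hprojL : ∀ (g : G) (x : ℝ),
      ((((L g : CircleDeg1Liftˣ) : CircleDeg1Lift) x : ℝ) : S1) = ρ g ((x : ℝ) : S1) := by
    intro g x
    rw [hL_apply, hproj g, coe_int_add]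
  -- upper bound
  have hlt : ∀ (g : G) (x : ℝ), ((L g : CircleDeg1Liftˣ) : CircleDeg1Lift) x < x + 1 := by
    intro g x
    have h := map_lt_add_translationNumber_add_one ((L g : CircleDeg1Liftˣ) : CircleDeg1Lift) x
    rw [htau g] at h
    linarith
  set A : Set ℝ := Set.range (fun g : G => ((L g : CircleDeg1Liftˣ) : CircleDeg1Lift) 0) with hA
  have hne : A.Nonempty := ⟨_, ⟨1, rfl⟩⟩
  have hbdd : BddAbove A := by
    refine ⟨1, ?_⟩
    rintro y ⟨g, rfl⟩
    have := hlt g 0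
    simp only at this ⊢
    linarith
  set S := sSup A with hS
  have hfix : ∀ h : G, ((L h : CircleDeg1Liftˣ) : CircleDeg1Lift) S = S := by
    intro h
    have hmono : Monotone ((L h : CircleDeg1Liftˣ) : CircleDeg1Lift) :=
      CircleDeg1Lift.monotone _
    have hsurj : Function.Surjective ((L h : CircleDeg1Liftˣ) : CircleDeg1Lift) :=
      (CircleDeg1Lift.isUnit_iff_bijective.1 ⟨L h, rfl⟩).2
    have hcont : Continuous ((L h : CircleDeg1Liftˣ) : CircleDeg1Lift) :=
      (CircleDeg1Lift.continuous_iff_surjective _).2 hsurj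
    have hmap := hmono.map_csSup_of_continuousAt hcont.continuousAt hne hbdd
    have himg : ((L h : CircleDeg1Liftˣ) : CircleDeg1Lift) '' A = A := by
      apply Set.eq_of_subset_of_subset
      · rintro y ⟨_, ⟨g, rfl⟩, rfl⟩
        refine ⟨h*g, ?_⟩
        show ((L (h*g) : CircleDeg1Liftˣ) : CircleDeg1Lift) 0 = _
        rw [hLmul, Units.val_mul, mul_apply]
      · rintro y ⟨g, rfl⟩
        refine ⟨((L (h⁻¹*g) : CircleDeg1Liftˣ) : CircleDeg1Lift) 0, ⟨h⁻¹*g, rfl⟩, ?_⟩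
        show ((L h : CircleDeg1Liftˣ) : CircleDeg1Lift)
          (((L (h⁻¹*g) : CircleDeg1Liftˣ) : CircleDeg1Lift) 0) = _
        rw [← mul_apply, ← Units.val_mul, ← hLmul, mul_inv_cancel_left]
    rw [← hS] at hmap
    rw [hmap, himg]
  refine ⟨((S : ℝ) : S1), fun g => ?_⟩
  rw [← hprojL g S, hfix g]
end

section
/- Every countable group with a left-invariant circular order acts faithfully on the circle by orientation-preserving homeomorphisms: if G is a countable group equipped with a circular order whose betweenness relation btw satisfies btw a b c → btw (g*a) (g*b) (g*c) for all g, a, b, c ∈ G, then there exists an injective group homomorphism ρ : G →* Homeomorph (AddCircle (1:ℝ)) (AddCircle (1:ℝ)) such that each ρ(g) preserves the betweenness relation btw of the circular order on AddCircle (1:ℝ). -/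
set_option linter.unusedSectionVars false

open scoped Classical

namespace CODG

variable {G : Type*} [Group G] [CircularOrder G]

/-- cut order at the identity : strict order -/
def clt (a b : G) : Prop := (a = 1 ∧ b ≠ 1) ∨ sbtw 1 a b

lemma sbtw_ne₁ {x y z : G} (h : sbtw x y z) : x ≠ y := fun e => sbtw_irrefl_left (e ▸ h)
lemma sbtw_ne₂ {x y z : G} (h : sbtw x y z) : y ≠ z := fun e => sbtw_irrefl_right (e ▸ h)
lemma sbtw_ne₃ {x y z : G} (h : sbtw x y z) : z ≠ x := fun e => sbtw_irrefl_left_right (e ▸ h)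

lemma clt_ne_one {a b : G} (h : clt a b) : b ≠ 1 := by
  rcases h with ⟨_, h⟩ | h
  · exact h
  · exact sbtw_ne₃ h

lemma clt_ne {a b : G} (h : clt a b) : a ≠ b := by
  rcases h with ⟨h1, h2⟩ | h
  · exact fun e => h2 (e ▸ h1)
  · exact sbtw_ne₂ h

lemma clt_irrefl (a : G) : ¬ clt a a := fun h => clt_ne h rfl

lemma one_clt {a : G} (h : a ≠ 1) : clt 1 a := Or.inl ⟨rfl, h⟩

lemma clt_of_sbtw {a b : G} (h : sbtw 1 a b) : clt a b := Or.inr h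

lemma clt_not_one {a b : G} (h : clt a b) (ha : a ≠ 1) : sbtw 1 a b := by
  rcases h with ⟨h1, _⟩ | h
  · exact absurd h1 ha
  · exact h

lemma clt_trans {a b c : G} (hab : clt a b) (hbc : clt b c) : clt a c := by
  rcases hab with ⟨ha, hb⟩ | hab
  · exact Or.inl ⟨ha, clt_ne_one hbc⟩
  · have hb : b ≠ 1 := sbtw_ne₃ hab
    have hbc' : sbtw 1 b c := clt_not_one hbc hb
    refine Or.inr ?_
    have h1 : sbtw a b 1 := hab.cyclic_left
    have h2 : sbtw b c 1 := hbc'.cyclic_left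
    exact (sbtw_trans_left h1 h2).cyclic_right

lemma clt_trichotomy (a b : G) : a = b ∨ clt a b ∨ clt b a := by
  by_cases hab : a = b
  · exact Or.inl hab
  by_cases ha : a = 1
  · exact Or.inr (Or.inl (ha ▸ one_clt (fun e => hab (ha.trans e.symm))))
  by_cases hb : b = 1
  · exact Or.inr (Or.inr (hb ▸ one_clt ha))
  rcases btw_total 1 a b with h | h
  · refine Or.inr (Or.inl (Or.inr (sbtw_of_btw_not_btw h ?_)))
    intro h'
    rcases btw_antisymm h h' with e | e | e
    · exact ha e.symm
    · exact hab e
    · exact hb e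
  · have h' : btw 1 b a := h.cyclic_right
    refine Or.inr (Or.inr (Or.inr (sbtw_of_btw_not_btw h' ?_)))
    intro h''
    rcases btw_antisymm h' h'' with e | e | e
    · exact hb e.symm
    · exact hab e.symm
    · exact ha e

lemma clt_asymm {a b : G} (h : clt a b) : ¬ clt b a :=
  fun h' => clt_irrefl a (clt_trans h h')

end CODG
namespace CODG

variable {G : Type*} [Group G] [CircularOrder G]
variable (hinv : ∀ g a b c : G, btw a b c → btw (g * a) (g * b) (g * c))

include hinv in
lemma sbtw_inv {g a b c : G} (h : sbtw a b c) : sbtw (g * a) (g * b) (g * c) := by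
  refine sbtw_of_btw_not_btw (hinv g a b c h.btw) ?_
  intro h'
  have := hinv g⁻¹ _ _ _ h'
  simp only [inv_mul_cancel_left] at this
  exact h.not_btw this

/-- wrap cocycle: 1 if left multiplication by `g` moves `a` past the basepoint. -/
noncomputable def cz (g a : G) : ℤ := if clt (g * a) g then 1 else 0

lemma cz_nonneg (g a : G) : 0 ≤ cz g a := by unfold cz; split <;> simp
lemma cz_le_one (g a : G) : cz g a ≤ 1 := by unfold cz; split <;> simp

@[simp] lemma cz_one (a : G) : cz 1 a = 0 := by
  unfold cz
  rw [if_neg]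
  exact fun h => clt_ne_one h rfl

@[simp] lemma cz_base (g : G) : cz g 1 = 0 := by
  unfold cz
  rw [mul_one, if_neg (clt_irrefl g)]

include hinv in
lemma key_L1 {g a b : G} (hab : clt a b) (ha : ¬ clt (g * a) g) (hb : ¬ clt (g * b) g) :
    clt (g * a) (g * b) := by
  have hble : b ≠ 1 := clt_ne_one hab
  have hga : g * a = g ∨ clt g (g * a) := by
    rcases clt_trichotomy (g * a) g with h | h | h
    · exact Or.inl h
    · exact absurd h ha
    · exact Or.inr h
  have hgb : g * b = g ∨ clt g (g * b) := by
    rcases clt_trichotomy (g * b) g with h | h | h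
    · exact Or.inl h
    · exact absurd h hb
    · exact Or.inr h
  by_cases hA : a = 1
  · subst hA
    rw [mul_one] at *
    rcases hgb with h | h
    · exact absurd (mul_left_cancel (h.trans (mul_one g).symm)) hble
    · exact h
  by_cases hg : g = 1
  · subst hg; simpa using hab
  have hsab : sbtw 1 a b := clt_not_one hab hA
  have K3 : sbtw g (g * a) (g * b) := by
    have := sbtw_inv hinv (g := g) hsab
    rwa [mul_one] at this
  rcases hga with h | h
  · exact absurd (mul_left_cancel (h.trans (mul_one g).symm)) hA
  rcases hgb with h' | h'
  · exact absurd (mul_left_cancel (h'.trans (mul_one g).symm)) hble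
  have K2 : sbtw 1 g (g * b) := clt_not_one h' hg
  exact clt_of_sbtw (sbtw_trans_left K2 K3)

include hinv in
lemma key_L2 {g a b : G} (hab : clt a b) (ha : clt (g * a) g) (hb : ¬ clt (g * b) g) :
    False := by
  have hg : g ≠ 1 := clt_ne_one ha
  have hble : b ≠ 1 := clt_ne_one hab
  by_cases hA : a = 1
  · subst hA; rw [mul_one] at ha; exact clt_irrefl g ha
  have hsab : sbtw 1 a b := clt_not_one hab hA
  have K3 : sbtw g (g * a) (g * b) := by
    have := sbtw_inv hinv (g := g) hsab
    rwa [mul_one] at this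
  have hgb : g * b = g ∨ clt g (g * b) := by
    rcases clt_trichotomy (g * b) g with h | h | h
    · exact Or.inl h
    · exact absurd h hb
    · exact Or.inr h
  rcases hgb with h | h
  · exact hble (mul_left_cancel (h.trans (mul_one g).symm))
  have K2 : sbtw 1 g (g * b) := clt_not_one h hg
  have K2'' : sbtw (g * b) 1 g := K2.cyclic_left.cyclic_left
  rcases ha with ⟨hga1, _⟩ | K1
  · rw [hga1] at K3
    exact K3.not_btw K2''.btw
  · -- K1 : sbtw 1 (g*a) g
    have : sbtw (g * b) (g * a) g := sbtw_trans_left K2'' K1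
    exact K3.not_btw this.btw

include hinv in
lemma key_L3 {g a b : G} (hab : clt a b) (ha : clt (g * a) g) (hb : clt (g * b) g) :
    clt (g * a) (g * b) := by
  have hg : g ≠ 1 := clt_ne_one ha
  have hble : b ≠ 1 := clt_ne_one hab
  by_cases hA : a = 1
  · subst hA; rw [mul_one] at ha; exact absurd ha (clt_irrefl g)
  have hsab : sbtw 1 a b := clt_not_one hab hA
  have K3 : sbtw g (g * a) (g * b) := by
    have := sbtw_inv hinv (g := g) hsab
    rwa [mul_one] at this
  by_cases hgb1 : g * b = 1
  · exfalso
    rw [hgb1] at K3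
    have K3' : sbtw 1 g (g * a) := K3.cyclic_left.cyclic_left
    rcases ha with ⟨hga1, _⟩ | K1
    · rw [hga1] at K3'
      exact sbtw_irrefl_left_right K3'
    · exact K1.not_btw K3'.cyclic_left.btw
  have K2 : sbtw 1 (g * b) g := clt_not_one hb hgb1
  by_cases hga1 : g * a = 1
  · rw [hga1]; exact one_clt hgb1
  have K1 : sbtw 1 (g * a) g := clt_not_one ha hga1
  rcases clt_trichotomy (g * a) (g * b) with h | h | h
  · exact absurd (mul_left_cancel h) (clt_ne hab)
  · exact h
  · exfalso
    have hA2 : sbtw 1 (g * b) (g * a) := clt_not_one h hgb1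
    have K1'' : sbtw g 1 (g * a) := K1.cyclic_left.cyclic_left
    have : sbtw g (g * b) (g * a) := sbtw_trans_left K1'' hA2
    exact K3.not_btw this.cyclic_left.btw

include hinv in
lemma key_dichotomy {g a b : G} (hab : clt a b) :
    cz g a < cz g b ∨ (cz g a = cz g b ∧ clt (g * a) (g * b)) := by
  unfold cz
  by_cases ha : clt (g * a) g <;> by_cases hb : clt (g * b) g
  · rw [if_pos ha, if_pos hb]; exact Or.inr ⟨rfl, key_L3 hinv hab ha hb⟩
  · exact (key_L2 hinv hab ha hb).elim
  · rw [if_neg ha, if_pos hb]; exact Or.inl zero_lt_one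
  · rw [if_neg ha, if_neg hb]; exact Or.inr ⟨rfl, key_L1 hinv hab ha hb⟩

end CODG
namespace CODG

variable {G : Type*} [Group G] [CircularOrder G]
variable (hinv : ∀ g a b c : G, btw a b c → btw (g * a) (g * b) (g * c))

/-- strict linear order on `G × ℚ` (circular order cut at `1`, fattened by `ℚ`). -/
def llt (l l' : G × ℚ) : Prop := clt l.1 l'.1 ∨ (l.1 = l'.1 ∧ l.2 < l'.2)

lemma llt_irrefl (l : G × ℚ) : ¬ llt l l := by
  rintro (h | ⟨_, h⟩)
  · exact clt_irrefl _ h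
  · exact lt_irrefl _ h

lemma llt_trans {l m n : G × ℚ} (h1 : llt l m) (h2 : llt m n) : llt l n := by
  rcases h1 with h1 | ⟨e1, h1⟩ <;> rcases h2 with h2 | ⟨e2, h2⟩
  · exact Or.inl (clt_trans h1 h2)
  · exact Or.inl (e2 ▸ h1)
  · exact Or.inl (e1 ▸ h2)
  · exact Or.inr ⟨e1.trans e2, h1.trans h2⟩

lemma llt_trichotomy (l m : G × ℚ) : l = m ∨ llt l m ∨ llt m l := by
  rcases clt_trichotomy l.1 m.1 with h | h | h
  · rcases lt_trichotomy l.2 m.2 with h' | h' | h'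
    · exact Or.inr (Or.inl (Or.inr ⟨h, h'⟩))
    · exact Or.inl (Prod.ext h h')
    · exact Or.inr (Or.inr (Or.inr ⟨h.symm, h'⟩))
  · exact Or.inr (Or.inl (Or.inl h))
  · exact Or.inr (Or.inr (Or.inl h))

lemma llt_asymm {l m : G × ℚ} (h : llt l m) : ¬ llt m l :=
  fun h' => llt_irrefl l (llt_trans h h')

/-- strict linear order on `ℤ × G × ℚ`, the "unrolled" version. -/
def elt (p q : ℤ × G × ℚ) : Prop := p.1 < q.1 ∨ (p.1 = q.1 ∧ llt p.2 q.2)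

lemma elt_irrefl (p : ℤ × G × ℚ) : ¬ elt p p := by
  rintro (h | ⟨_, h⟩)
  · exact lt_irrefl _ h
  · exact llt_irrefl _ h

lemma elt_trans {p q s : ℤ × G × ℚ} (h1 : elt p q) (h2 : elt q s) : elt p s := by
  rcases h1 with h1 | ⟨e1, h1⟩ <;> rcases h2 with h2 | ⟨e2, h2⟩
  · exact Or.inl (h1.trans h2)
  · exact Or.inl (e2 ▸ h1)
  · exact Or.inl (e1 ▸ h2)
  · exact Or.inr ⟨e1.trans e2, llt_trans h1 h2⟩

lemma elt_trichotomy (p q : ℤ × G × ℚ) : p = q ∨ elt p q ∨ elt q p := by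
  rcases lt_trichotomy p.1 q.1 with h | h | h
  · exact Or.inr (Or.inl (Or.inl h))
  · rcases llt_trichotomy p.2 q.2 with h' | h' | h'
    · exact Or.inl (Prod.ext h h')
    · exact Or.inr (Or.inl (Or.inr ⟨h, h'⟩))
    · exact Or.inr (Or.inr (Or.inr ⟨h.symm, h'⟩))
  · exact Or.inr (Or.inr (Or.inl h))

lemma elt_asymm {p q : ℤ × G × ℚ} (h : elt p q) : ¬ elt q p :=
  fun h' => elt_irrefl p (elt_trans h h')

/-- shift in the `ℤ` coordinate. -/
def eshift (e : ℤ) (p : ℤ × G × ℚ) : ℤ × G × ℚ := (p.1 + e, p.2)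

@[simp] lemma eshift_eshift (e e' : ℤ) (p : ℤ × G × ℚ) :
    eshift e (eshift e' p) = eshift (e + e') p := by
  simp [eshift, add_assoc, add_comm e' e]

@[simp] lemma eshift_zero (p : ℤ × G × ℚ) : eshift 0 p = p := by simp [eshift]

lemma eshift_mono (e : ℤ) {p q : ℤ × G × ℚ} (h : elt p q) : elt (eshift e p) (eshift e q) := by
  rcases h with h | ⟨h1, h2⟩
  · exact Or.inl (by simpa [eshift] using h)
  · exact Or.inr ⟨by simp [eshift, h1], h2⟩

/-- the unrolled action of `G`. -/
noncomputable def phi (g : G) (p : ℤ × G × ℚ) : ℤ × G × ℚ :=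
  (p.1 + cz g p.2.1, g * p.2.1, p.2.2)

lemma cz_eq_one_iff {g a : G} : cz g a = 1 ↔ clt (g * a) g := by
  unfold cz; split <;> simp_all

lemma cz_eq_zero_iff {g a : G} : cz g a = 0 ↔ ¬ clt (g * a) g := by
  unfold cz; split <;> simp_all

@[simp] lemma phi_one (p : ℤ × G × ℚ) : phi 1 p = p := by
  simp [phi, cz_one]

lemma phi_eshift (g : G) (e : ℤ) (p : ℤ × G × ℚ) :
    phi g (eshift e p) = eshift e (phi g p) := by
  simp [phi, eshift, add_right_comm]

include hinv in
lemma phi_mono (g : G) {p q : ℤ × G × ℚ} (h : elt p q) : elt (phi g p) (phi g q) := by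
  rcases h with h | ⟨h1, h2⟩
  · have hb1 := cz_le_one g p.2.1
    have hb2 := cz_nonneg g q.2.1
    rcases lt_or_eq_of_le (show p.1 + cz g p.2.1 ≤ q.1 + cz g q.2.1 by omega) with h' | h'
    · exact Or.inl h'
    · refine Or.inr ⟨h', Or.inl ?_⟩
      have e1 : cz g p.2.1 = 1 := by omega
      have e2 : cz g q.2.1 = 0 := by omega
      have c1 : clt (g * p.2.1) g := cz_eq_one_iff.1 e1
      have c2 : ¬ clt (g * q.2.1) g := cz_eq_zero_iff.1 e2
      show clt (g * p.2.1) (g * q.2.1)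
      rcases clt_trichotomy (g * q.2.1) g with h'' | h'' | h''
      · rw [h'']; exact c1
      · exact absurd h'' c2
      · exact clt_trans c1 h''
  · rcases h2 with h2 | ⟨e2, h2⟩
    · rcases key_dichotomy hinv (g := g) h2 with h' | ⟨h', h''⟩
      · exact Or.inl (by simp only [phi]; omega)
      · exact Or.inr ⟨by simp only [phi]; omega, Or.inl h''⟩
    · exact Or.inr ⟨by simp only [phi, e2, h1], Or.inr ⟨by simp [phi, e2], h2⟩⟩

/-- a `ℤ`-valued function whose graph-shear is monotone is constant. -/
lemma const_of_mono (f : G × ℚ → ℤ)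
    (hm : ∀ p q : ℤ × G × ℚ, elt p q → elt (p.1 + f p.2, p.2) (q.1 + f q.2, q.2)) :
    ∀ l l', f l = f l' := by
  have main : ∀ l l', llt l l' → f l = f l' := by
    intro l l' h
    have h1 := hm (0, l) (0, l') (Or.inr ⟨rfl, h⟩)
    have h2 := hm (0, l') (1, l) (Or.inl zero_lt_one)
    have hle1 : f l ≤ f l' := by
      rcases h1 with h1 | ⟨h1, _⟩
      · simpa using le_of_lt h1
      · simp at h1; omega
    rcases h2 with h2 | ⟨h2, h2'⟩
    · simp at h2; omega
    · exact absurd h2' (llt_asymm h)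
  intro l l'
  rcases llt_trichotomy l l' with h | h | h
  · exact h ▸ rfl
  · exact main _ _ h
  · exact (main _ _ h).symm

/-- the commutation constant. -/
noncomputable def czk (g : G) : ℤ := cz g⁻¹ g

include hinv in
lemma phi_inv_phi (g : G) (p : ℤ × G × ℚ) :
    phi g⁻¹ (phi g p) = eshift (czk g) p := by
  have hform : ∀ q : ℤ × G × ℚ,
      phi g⁻¹ (phi g q) = (q.1 + (cz g q.2.1 + cz g⁻¹ (g * q.2.1)), q.2) := by
    intro q
    simp [phi, Prod.ext_iff, add_assoc]
  have hc := const_of_mono (fun l => cz g l.1 + cz g⁻¹ (g * l.1))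
    (by
      intro p q h
      have := phi_mono hinv g⁻¹ (phi_mono hinv g h)
      rwa [hform, hform] at this)
  have hcp := hc p.2 (1, 0)
  simp only [] at hcp
  rw [hform p, hcp]
  simp [eshift, czk, cz_base]

include hinv in
lemma czk_symm (g : G) : cz g g⁻¹ = czk g := by
  have := congrArg Prod.fst (phi_inv_phi hinv g (0, g⁻¹, 0))
  simp [phi, eshift, mul_inv_cancel, cz_base] at this
  omega

include hinv in
lemma phi_phi_inv (g : G) (p : ℤ × G × ℚ) :
    phi g (phi g⁻¹ p) = eshift (czk g) p := by
  have := phi_inv_phi hinv g⁻¹ p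
  rw [czk, inv_inv, czk_symm hinv] at this
  exact this

/-- inverse of `phi g`. -/
noncomputable def invphi (g : G) (p : ℤ × G × ℚ) : ℤ × G × ℚ :=
  phi g⁻¹ (eshift (-(czk g)) p)

include hinv in
lemma phi_invphi (g : G) (p : ℤ × G × ℚ) : phi g (invphi g p) = p := by
  rw [invphi, phi_eshift, phi_eshift, phi_phi_inv hinv]
  simp

include hinv in
lemma invphi_phi (g : G) (p : ℤ × G × ℚ) : invphi g (phi g p) = p := by
  rw [invphi, phi_eshift, phi_inv_phi hinv]
  simp

include hinv in
lemma invphi_mono (g : G) {p q : ℤ × G × ℚ} (h : elt p q) :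
    elt (invphi g p) (invphi g q) := phi_mono hinv g⁻¹ (eshift_mono _ h)

include hinv in
lemma phi_surj (g : G) : Function.Surjective (phi g) :=
  fun p => ⟨invphi g p, phi_invphi hinv g p⟩

include hinv in
lemma phi_mul (g h : G) : ∃ e : ℤ, ∀ p, phi g (phi h p) = eshift e (phi (g * h) p) := by
  have hform : ∀ q : ℤ × G × ℚ,
      invphi (g * h) (phi g (phi h q)) =
        (q.1 + (cz h q.2.1 + cz g (h * q.2.1) + (-(czk (g * h)) + cz (g * h)⁻¹ (g * (h * q.2.1)))),
          q.2) := by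
    intro q
    unfold invphi phi eshift
    dsimp only
    refine Prod.ext (by ring) (Prod.ext ?_ rfl)
    dsimp only
    simp [mul_assoc]
  have hc := const_of_mono
    (fun l => cz h l.1 + cz g (h * l.1) + (-(czk (g * h)) + cz (g * h)⁻¹ (g * (h * l.1))))
    (by
      intro p q hpq
      have := invphi_mono hinv (g * h) (phi_mono hinv g (phi_mono hinv h hpq))
      rwa [hform, hform] at this)
  set e0 : ℤ := cz h 1 + cz g (h * 1) + (-(czk (g * h)) + cz (g * h)⁻¹ (g * (h * 1)))
  refine ⟨e0, fun p => ?_⟩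
  have h1 : invphi (g * h) (phi g (phi h p)) = eshift e0 p := by
    have hcp := hc p.2 (1, 0)
    simp only [] at hcp
    rw [hform p, hcp]
    simp [eshift, e0, add_comm]
  have := congrArg (phi (g * h)) h1
  rw [phi_invphi hinv] at this
  rw [this, phi_eshift]

end CODG
namespace CODG

section Ext

variable {α : Type*} {r : α → α → Prop} {emb : α → ℝ}

/-- canonical extension of a map of a suborder of `ℝ` to all of `ℝ`. -/
noncomputable def ExtF (emb : α → ℝ) (ψ : α → α) (x : ℝ) : ℝ :=
  sSup ((fun p => emb (ψ p)) '' {p | emb p ≤ x})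

variable (htri : ∀ p q : α, p = q ∨ r p q ∨ r q p)
variable (hemb : ∀ {p q : α}, r p q → emb p < emb q)
variable (hdense : ∀ x y : ℝ, x < y → ∃ p : α, x < emb p ∧ emb p < y)

include htri hemb in
lemma r_of_lt {p q : α} (h : emb p < emb q) : r p q := by
  rcases htri p q with e | h' | h'
  · exact absurd (e ▸ h) (lt_irrefl _)
  · exact h'
  · exact absurd (hemb h') (not_lt_of_gt h)

include htri hemb in
lemma emb_le_emb {ψ : α → α} {p q : α} (h : emb p ≤ emb q) (hψ : ∀ {p q : α}, r p q → r (ψ p) (ψ q)) :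
    emb (ψ p) ≤ emb (ψ q) := by
  rcases htri p q with e | h' | h'
  · exact le_of_eq (congrArg (fun t => emb (ψ t)) e)
  · exact le_of_lt (hemb (hψ h'))
  · exact absurd (hemb h') (not_lt_of_ge h)

include hdense in
lemma ext_nonempty (x : ℝ) : {p : α | emb p ≤ x}.Nonempty := by
  obtain ⟨p, _, h2⟩ := hdense (x - 1) x (by linarith)
  exact ⟨p, le_of_lt h2⟩

include htri hemb hdense in
lemma ext_bdd {ψ : α → α} (hψ : ∀ {p q : α}, r p q → r (ψ p) (ψ q)) (x : ℝ) :
    BddAbove ((fun p => emb (ψ p)) '' {p | emb p ≤ x}) := by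
  obtain ⟨q, hq1, _⟩ := hdense x (x + 1) (by linarith)
  refine ⟨emb (ψ q), ?_⟩
  rintro y ⟨p, hp, rfl⟩
  exact le_of_lt (hemb (hψ (r_of_lt htri hemb (lt_of_le_of_lt hp hq1))))

include htri hemb hdense in
lemma ExtF_apply {ψ : α → α} (hψ : ∀ {p q : α}, r p q → r (ψ p) (ψ q)) (q : α) :
    ExtF emb ψ (emb q) = emb (ψ q) := by
  refine le_antisymm (csSup_le ((ext_nonempty hdense _).image _) ?_)
    (le_csSup (ext_bdd htri hemb hdense hψ _) ⟨q, show emb q ≤ emb q from le_rfl, rfl⟩)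
  rintro y ⟨p, hp, rfl⟩
  exact emb_le_emb htri hemb hp hψ

include hdense in
lemma ExtF_mono {ψ : α → α} (hψ : ∀ {p q : α}, r p q → r (ψ p) (ψ q))
    {x y : ℝ} (h : x ≤ y)
    (hbdd : BddAbove ((fun p => emb (ψ p)) '' {p | emb p ≤ y})) :
    ExtF emb ψ x ≤ ExtF emb ψ y :=
  csSup_le_csSup hbdd ((ext_nonempty hdense _).image _)
    (Set.image_mono fun p hp => le_trans hp h)

include htri hemb hdense in
lemma ExtF_strictMono {ψ : α → α} (hψ : ∀ {p q : α}, r p q → r (ψ p) (ψ q))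
    {x y : ℝ} (h : x < y) : ExtF emb ψ x < ExtF emb ψ y := by
  obtain ⟨p, hp1, hp2⟩ := hdense x y h
  obtain ⟨q, hq1, hq2⟩ := hdense (emb p) y hp2
  have h1 : ExtF emb ψ x ≤ emb (ψ p) := by
    refine csSup_le ((ext_nonempty hdense _).image _) ?_
    rintro y ⟨s, hs, rfl⟩
    exact le_of_lt (hemb (hψ (r_of_lt htri hemb (lt_of_le_of_lt hs hp1))))
  have h2 : emb (ψ p) < emb (ψ q) := hemb (hψ (r_of_lt htri hemb hq1))
  have h3 : emb (ψ q) ≤ ExtF emb ψ y :=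
    le_csSup (ext_bdd htri hemb hdense hψ _) ⟨q, le_of_lt hq2, rfl⟩
  linarith

include htri hemb hdense in
lemma ExtF_comp {ψ χ : α → α}
    (hψ : ∀ {p q : α}, r p q → r (ψ p) (ψ q)) (hχ : ∀ {p q : α}, r p q → r (χ p) (χ q))
    (hψs : Function.Surjective ψ) (hχs : Function.Surjective χ) (x : ℝ) :
    ExtF emb ψ (ExtF emb χ x) = ExtF emb (fun p => ψ (χ p)) x := by
  have hψχ : ∀ {p q : α}, r p q → r (ψ (χ p)) (ψ (χ q)) := fun h => hψ (hχ h)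
  refine le_antisymm ?_ ?_
  · refine csSup_le ((ext_nonempty hdense _).image _) ?_
    rintro y ⟨q, hq, rfl⟩
    by_contra hcon
    push_neg at hcon
    obtain ⟨rr, hr1, hr2⟩ := hdense _ _ hcon
    obtain ⟨r0, rfl⟩ := hψs rr
    obtain ⟨r1, rfl⟩ := hχs r0
    -- r1 : α, emb (ψ (χ r1)) strictly between sup and emb (ψ q)
    have kk : ∀ p : α, emb p ≤ x → r (χ p) (χ r1) := by
      intro p hp
      have h1 : emb (ψ (χ p)) ≤ ExtF emb (fun p => ψ (χ p)) x :=
        le_csSup (ext_bdd htri hemb hdense hψχ _) ⟨p, hp, rfl⟩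
      have h2 : r (ψ (χ p)) (ψ (χ r1)) := r_of_lt htri hemb (lt_of_le_of_lt h1 hr1)
      rcases htri (χ p) (χ r1) with e | h' | h'
      · exact absurd (hemb h2) (by rw [e]; exact lt_irrefl _)
      · exact h'
      · exact absurd (hemb (hψ h')) (not_lt_of_gt (hemb h2))
    have hxr1 : ¬ emb r1 ≤ x := by
      intro hle
      exact absurd (hemb (kk r1 hle)) (lt_irrefl _)
    -- emb q ≤ ExtF χ x ≤ emb (χ r1)
    have h4 : ExtF emb χ x ≤ emb (χ r1) := by
      refine csSup_le ((ext_nonempty hdense _).image _) ?_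
      rintro y ⟨p, hp, rfl⟩
      exact le_of_lt (hemb (kk p hp))
    -- also r (χ r1) q  since emb (ψ (χ r1)) < emb (ψ q)
    have h5 : r (ψ (χ r1)) (ψ q) := r_of_lt htri hemb hr2
    have h6 : r (χ r1) q := by
      rcases htri (χ r1) q with e | h' | h'
      · exact absurd (hemb h5) (by rw [e]; exact lt_irrefl _)
      · exact h'
      · exact absurd (hemb (hψ h')) (not_lt_of_gt (hemb h5))
    have := lt_of_le_of_lt (le_trans hq h4) (hemb h6)
    exact absurd this (lt_irrefl _)
  · refine csSup_le ((ext_nonempty hdense _).image _) ?_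
    rintro y ⟨p, hp, rfl⟩
    refine le_csSup (ext_bdd htri hemb hdense hψ _) ⟨χ p, ?_, rfl⟩
    exact le_csSup (ext_bdd htri hemb hdense hχ _) ⟨p, hp, rfl⟩

include htri hemb hdense in
lemma ExtF_translation {σ : α → α} {c : ℝ} (hσ : ∀ p, emb (σ p) = emb p + c) (x : ℝ) :
    ExtF emb σ x = x + c := by
  refine le_antisymm (csSup_le ((ext_nonempty hdense _).image _) ?_) ?_
  · rintro y ⟨p, hp, rfl⟩
    dsimp only
    rw [hσ]
    exact add_le_add_left hp c
  · by_contra hcon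
    push_neg at hcon
    obtain ⟨p, hp1, hp2⟩ := hdense (ExtF emb σ x - c) x (by linarith)
    have : emb p + c ≤ ExtF emb σ x := by
      refine le_csSup ?_ ⟨p, le_of_lt hp2, by dsimp only; rw [hσ]⟩
      refine ⟨x + c, ?_⟩
      rintro y ⟨q, hq, rfl⟩
      dsimp only
      rw [hσ]
      exact add_le_add_left hq c
    linarith

lemma sSup_add_const (B : Set ℝ) (hne : B.Nonempty) (hbdd : BddAbove B) (c : ℝ) :
    sSup ((fun y => y + c) '' B) = sSup B + c := by
  obtain ⟨u, hu⟩ := hbdd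
  refine le_antisymm (csSup_le (hne.image _) ?_) ?_
  · rintro y ⟨z, hz, rfl⟩
    exact add_le_add_left (le_csSup ⟨u, hu⟩ hz) c
  · rw [← le_sub_iff_add_le]
    refine csSup_le hne fun z hz => le_sub_iff_add_le.2 ?_
    refine le_csSup ⟨u + c, ?_⟩ ⟨z, hz, rfl⟩
    rintro y ⟨w, hw, rfl⟩
    exact add_le_add_left (hu hw) c

include htri hemb hdense in
lemma ExtF_equivariant {ψ es : α → α}
    (hψ : ∀ {p q : α}, r p q → r (ψ p) (ψ q))
    (hes : ∀ p, emb (es p) = emb p + 1) (hessurj : Function.Surjective es)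
    (hcomm : ∀ p, ψ (es p) = es (ψ p)) (x : ℝ) :
    ExtF emb ψ (x + 1) = ExtF emb ψ x + 1 := by
  have hset : {p : α | emb p ≤ x + 1} = es '' {p : α | emb p ≤ x} := by
    ext p
    constructor
    · intro hp
      obtain ⟨q, rfl⟩ := hessurj p
      simp only [Set.mem_setOf_eq, hes] at hp
      exact ⟨q, by simp only [Set.mem_setOf_eq]; linarith, rfl⟩
    · rintro ⟨q, hq, rfl⟩
      simp only [Set.mem_setOf_eq, hes]
      exact add_le_add_left (show emb q ≤ x from hq) 1
  have himg : (fun p => emb (ψ p)) '' {p : α | emb p ≤ x + 1}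
      = (fun y => y + 1) '' ((fun p => emb (ψ p)) '' {p : α | emb p ≤ x}) := by
    rw [hset, ← Set.image_comp, ← Set.image_comp]
    refine Set.image_congr fun p _ => ?_
    simp only [Function.comp_apply, hcomm, hes]
  rw [ExtF, himg, sSup_add_const _ ((ext_nonempty hdense _).image _)
    (ext_bdd htri hemb hdense hψ _)]
  rfl

end Ext

end CODG
namespace CODG

lemma int_equi {f : ℝ → ℝ} (hf : ∀ x, f (x + 1) = f x + 1) (n : ℤ) (x : ℝ) :
    f (x + n) = f x + n := by
  have hsub : ∀ y, f (y - 1) = f y - 1 := by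
    intro y
    have := hf (y - 1)
    rw [sub_add_cancel] at this
    linarith
  induction n using Int.induction_on with
  | zero => simp
  | succ k ih =>
    have h1 : (x + ((k : ℤ) + 1 : ℤ) : ℝ) = (x + (k : ℤ)) + 1 := by push_cast; ring
    rw [h1, hf, ih]
    push_cast; ring
  | pred k ih =>
    have h1 : (x + (-(k : ℤ) - 1 : ℤ) : ℝ) = (x + (-(k : ℤ) : ℤ)) - 1 := by push_cast; ring
    rw [h1, hsub, ih]
    push_cast; ring

/-- descend an equivariant map of `ℝ` to the circle. -/
noncomputable def descend (f : ℝ → ℝ) (hf : ∀ x, f (x + 1) = f x + 1) :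
    AddCircle (1 : ℝ) → AddCircle (1 : ℝ) :=
  Quotient.map' f (by
    intro x y hxy
    rw [QuotientAddGroup.leftRel_apply] at hxy ⊢
    obtain ⟨n, hn⟩ := hxy
    refine ⟨n, ?_⟩
    have hy : y = x + n := by
      simp only [zsmul_eq_mul, mul_one] at hn
      linarith
    rw [hy, int_equi hf n x]
    simp)

@[simp] lemma descend_mk (f : ℝ → ℝ) (hf : ∀ x, f (x + 1) = f x + 1) (x : ℝ) :
    descend f hf (x : ℝ) = ((f x : ℝ) : AddCircle (1 : ℝ)) := rfl

lemma descend_continuous {f : ℝ → ℝ} (hf : ∀ x, f (x + 1) = f x + 1)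
    (hc : Continuous f) : Continuous (descend f hf) := by
  rw [(QuotientAddGroup.isQuotientMap_mk (AddSubgroup.zmultiples (1:ℝ))).continuous_iff]
  have : (descend f hf) ∘ (QuotientAddGroup.mk : ℝ → AddCircle (1:ℝ))
      = (QuotientAddGroup.mk : ℝ → AddCircle (1:ℝ)) ∘ f := rfl
  rw [this]
  exact continuous_quotient_mk'.comp hc

lemma mk_add_int (x : ℝ) (e : ℤ) :
    ((x + e : ℝ) : AddCircle (1 : ℝ)) = (x : ℝ) := by
  rw [QuotientAddGroup.eq_iff_sub_mem]
  refine ⟨e, by simp⟩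

lemma descend_btw {f : ℝ → ℝ} (hf : ∀ x, f (x + 1) = f x + 1) (hm : StrictMono f)
    (a b c : ℝ) (h : btw (a : AddCircle (1:ℝ)) (b : ℝ) (c : ℝ)) :
    btw ((f a : ℝ) : AddCircle (1:ℝ)) ((f b : ℝ) : AddCircle (1:ℝ)) ((f c : ℝ) : AddCircle (1:ℝ)) := by
  rw [QuotientAddGroup.btw_coe_iff] at h ⊢
  have hp : (0:ℝ) < 1 := one_pos
  set b' := toIcoMod hp a b with hb'
  set c' := toIocMod hp a c with hc'
  have hbmem : b' ∈ Set.Ico a (a + 1) := toIcoMod_mem_Ico hp a b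
  have hcmem : c' ∈ Set.Ioc a (a + 1) := toIocMod_mem_Ioc hp a c
  have hbz : ∃ z : ℤ, b = b' + z • (1:ℝ) := ⟨toIcoDiv hp a b, by
    rw [hb']; rw [toIcoMod]; ring⟩
  have hcz : ∃ z : ℤ, c = c' + z • (1:ℝ) := ⟨toIocDiv hp a c, by
    rw [hc']; rw [toIocMod]; ring⟩
  have hfb : toIcoMod hp (f a) (f b) = f b' := by
    rw [toIcoMod_eq_iff hp]
    constructor
    · constructor
      · exact hm.monotone hbmem.1
      · have := hm hbmem.2
        rwa [hf] at this
    · obtain ⟨z, hz⟩ := hbz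
      refine ⟨z, ?_⟩
      rw [hz]
      have := int_equi hf z b'
      simp only [zsmul_eq_mul, mul_one] at this ⊢
      rw [this]
  have hfc : toIocMod hp (f a) (f c) = f c' := by
    rw [toIocMod_eq_iff hp]
    constructor
    · constructor
      · exact hm hcmem.1
      · have := hm.monotone hcmem.2
        rwa [hf] at this
    · obtain ⟨z, hz⟩ := hcz
      refine ⟨z, ?_⟩
      rw [hz]
      have := int_equi hf z c'
      simp only [zsmul_eq_mul, mul_one] at this ⊢
      rw [this]
  have h2 : toIcoMod hp a b ≤ toIocMod hp a c := h
  show toIcoMod hp (f a) (f b) ≤ toIocMod hp (f a) (f c)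
  rw [hfb, hfc]
  exact hm.monotone h2

end CODG
namespace CODG

variable {G : Type*} [Group G] [CircularOrder G]

lemma exists_jr (G : Type*) [Group G] [CircularOrder G] [Countable G] :
    ∃ jr : G × ℚ → ℝ, (∀ {l l' : G × ℚ}, llt l l' → jr l < jr l') ∧
      (∀ l, jr l ∈ Set.Ioo (0:ℝ) 1) ∧ (∀ q : ℚ, 0 < q → q < 1 → ∃ l, jr l = (q:ℝ)) := by
  classical
  haveI : IsStrictTotalOrder (G × ℚ) llt :=
    { trichotomous := fun a b => by
        rcases llt_trichotomy a b with h | h | h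
        exacts [fun _ _ => h, fun h1 _ => absurd h h1, fun _ h2 => absurd h h2]
      irrefl := llt_irrefl
      trans := fun _ _ _ => llt_trans }
  letI lo : LinearOrder (G × ℚ) := linearOrderOfSTO llt
  have hlt : ∀ {l l' : G × ℚ}, l < l' ↔ llt l l' := fun {l l'} => Iff.rfl
  haveI : DenselyOrdered (G × ℚ) := by
    constructor
    intro a b hab
    rcases hlt.1 hab with h | ⟨h1, h2⟩
    · exact ⟨(a.1, a.2 + 1), hlt.2 (Or.inr ⟨rfl, lt_add_one _⟩), hlt.2 (Or.inl h)⟩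
    · obtain ⟨c, hc1, hc2⟩ := exists_between h2
      exact ⟨(a.1, c), hlt.2 (Or.inr ⟨rfl, hc1⟩), hlt.2 (Or.inr ⟨h1, hc2⟩)⟩
  haveI : NoMaxOrder (G × ℚ) :=
    ⟨fun a => ⟨(a.1, a.2 + 1), hlt.2 (Or.inr ⟨rfl, lt_add_one _⟩)⟩⟩
  haveI : NoMinOrder (G × ℚ) :=
    ⟨fun a => ⟨(a.1, a.2 - 1), hlt.2 (Or.inr ⟨rfl, show a.2 - 1 < a.2 by linarith⟩)⟩⟩
  haveI : Nonempty (G × ℚ) := ⟨(1, 0)⟩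
  haveI : Set.OrdConnected (Set.Ioo (0:ℚ) 1) := Set.ordConnected_Ioo
  haveI : Nonempty (Set.Ioo (0:ℚ) 1) := ⟨⟨1/2, by norm_num, by norm_num⟩⟩
  haveI : NoMaxOrder (Set.Ioo (0:ℚ) 1) := by
    constructor
    intro a
    obtain ⟨c, hc1, hc2⟩ := exists_between a.2.2
    exact ⟨⟨c, lt_trans a.2.1 hc1, hc2⟩, hc1⟩
  haveI : NoMinOrder (Set.Ioo (0:ℚ) 1) := by
    constructor
    intro a
    obtain ⟨c, hc1, hc2⟩ := exists_between a.2.1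
    exact ⟨⟨c, hc1, lt_trans hc2 a.2.2⟩, hc2⟩
  obtain ⟨j⟩ := Order.iso_of_countable_dense (G × ℚ) (Set.Ioo (0:ℚ) 1)
  refine ⟨fun l => ((j l : ℚ) : ℝ), ?_, ?_, ?_⟩
  · intro l l' h
    have h2 : j l < j l' := j.lt_iff_lt.2 (hlt.2 h)
    show ((j l : ℚ) : ℝ) < ((j l' : ℚ) : ℝ)
    exact_mod_cast h2
  · intro l
    constructor
    · show (0:ℝ) < ((j l : ℚ) : ℝ)
      exact_mod_cast (j l).2.1
    · show ((j l : ℚ) : ℝ) < 1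
      exact_mod_cast (j l).2.2
  · intro q hq0 hq1
    refine ⟨j.symm ⟨q, hq0, hq1⟩, ?_⟩
    show ((j (j.symm ⟨q, hq0, hq1⟩) : ℚ) : ℝ) = (q : ℝ)
    rw [j.apply_symm_apply]

end CODG
open CODG in
/-- Every countable group with a left-invariant circular order acts faithfully
on the circle by orientation-preserving homeomorphisms. -/
theorem countable_circularly_ordered_group_acts_on_circle
    (G : Type*) [Group G] [Countable G] [CircularOrder G]
    (hinv : ∀ g a b c : G, btw a b c → btw (g * a) (g * b) (g * c)) :
    ∃ ρ : G →* Homeomorph (AddCircle (1 : ℝ)) (AddCircle (1 : ℝ)),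
      Function.Injective ρ ∧
      ∀ (g : G) (a b c : AddCircle (1 : ℝ)),
        btw a b c → btw (ρ g a) (ρ g b) (ρ g c) := by
  classical
  obtain ⟨jr, hjmono, hjmem, hjsurj⟩ := exists_jr G
  set emb : ℤ × G × ℚ → ℝ := fun p => (p.1 : ℝ) + jr p.2 with hembdef
  have hemb : ∀ {p q : ℤ × G × ℚ}, elt p q → emb p < emb q := by
    intro p q h
    rcases h with h | ⟨h1, h2⟩
    · have hle : (p.1 : ℝ) + 1 ≤ (q.1 : ℝ) := by exact_mod_cast h
      have b1 := (hjmem p.2).2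
      have b2 := (hjmem q.2).1
      simp only [hembdef]
      linarith
    · have hlt := hjmono h2
      simp only [hembdef]
      rw [h1]
      linarith
  have htri : ∀ p q : ℤ × G × ℚ, p = q ∨ elt p q ∨ elt q p := elt_trichotomy
  have hdense : ∀ x y : ℝ, x < y → ∃ p : ℤ × G × ℚ, x < emb p ∧ emb p < y := by
    intro x y hxy
    set n : ℤ := ⌊x⌋ with hn
    have hn1 : (n:ℝ) ≤ x := Int.floor_le x
    have hn2 : x - 1 < (n:ℝ) := Int.sub_one_lt_floor x
    set y' : ℝ := min y (x + 1) with hy'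
    have hy1 : x < y' := lt_min hxy (by linarith)
    have hxm : x - n < min (y' - n) 1 := lt_min (by linarith) (by linarith)
    obtain ⟨q, hq1, hq2⟩ := exists_rat_btwn hxm
    have hq0 : (0:ℚ) < q := by
      have h0 : (0:ℝ) < (q:ℝ) := lt_of_le_of_lt (by linarith) hq1
      exact_mod_cast h0
    have hq1' : q < 1 := by
      have h1 : (q:ℝ) < 1 := lt_of_lt_of_le hq2 (min_le_right _ _)
      exact_mod_cast h1
    obtain ⟨l, hl⟩ := hjsurj q hq0 hq1'
    have hqy : (n:ℝ) + q < y' := by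
      have := lt_of_lt_of_le hq2 (min_le_left _ _)
      linarith
    refine ⟨(n, l), ?_, ?_⟩
    · show x < (n:ℝ) + jr l
      rw [hl]; linarith
    · show (n:ℝ) + jr l < y
      rw [hl]
      exact lt_of_lt_of_le hqy (min_le_left _ _)
  have hφ : ∀ (g : G) {p q}, elt p q → elt (phi g p) (phi g q) :=
    fun g {p q} h => phi_mono hinv g h
  have hφs : ∀ g : G, Function.Surjective (phi g) := phi_surj hinv
  have hiφ : ∀ (g : G) {p q}, elt p q → elt (invphi g p) (invphi g q) :=
    fun g {p q} h => invphi_mono hinv g h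
  have hiφs : ∀ g : G, Function.Surjective (invphi g) :=
    fun g p => ⟨phi g p, invphi_phi hinv g p⟩
  have hes : ∀ (e : ℤ) (p : ℤ × G × ℚ), emb (eshift e p) = emb p + e := by
    intro e p
    show ((p.1 + e : ℤ) : ℝ) + jr p.2 = ((p.1 : ℝ) + jr p.2) + e
    push_cast; ring
  have hes1 : ∀ (p : ℤ × G × ℚ), emb (eshift 1 p) = emb p + 1 := by
    intro p
    rw [hes 1 p]
    norm_num
  have hesm : ∀ (e : ℤ) {p q : ℤ × G × ℚ}, elt p q → elt (eshift e p) (eshift e q) :=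
    fun e {p q} h => eshift_mono e h
  have hess : ∀ e : ℤ, Function.Surjective (eshift (G := G) e) :=
    fun e p => ⟨eshift (-e) p, by simp⟩
  -- the extended maps on ℝ
  have hFmono : ∀ g : G, StrictMono (ExtF emb (phi g)) :=
    fun g x y h => ExtF_strictMono htri hemb hdense (hφ g) h
  have hF'mono : ∀ g : G, StrictMono (ExtF emb (invphi g)) :=
    fun g x y h => ExtF_strictMono htri hemb hdense (hiφ g) h
  have hFequi : ∀ (g : G) x, ExtF emb (phi g) (x + 1) = ExtF emb (phi g) x + 1 :=
    fun g x => ExtF_equivariant htri hemb hdense (hφ g) hes1 (hess 1)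
      (fun p => phi_eshift g 1 p) x
  have hiφes : ∀ (g : G) p, invphi g (eshift 1 p) = eshift 1 (invphi g p) := by
    intro g p
    show phi g⁻¹ (eshift (-(czk g)) (eshift 1 p)) = eshift 1 (phi g⁻¹ (eshift (-(czk g)) p))
    rw [eshift_eshift, ← phi_eshift, eshift_eshift, add_comm (-(czk g)) 1]
  have hF'equi : ∀ (g : G) x, ExtF emb (invphi g) (x + 1) = ExtF emb (invphi g) x + 1 :=
    fun g x => ExtF_equivariant htri hemb hdense (hiφ g) hes1 (hess 1) (hiφes g) x
  have hid1 : ∀ (g : G) x, ExtF emb (phi g) (ExtF emb (invphi g) x) = x := by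
    intro g x
    rw [ExtF_comp htri hemb hdense (hφ g) (hiφ g) (hφs g) (hiφs g)]
    have hσ : ∀ p, emb (phi g (invphi g p)) = emb p + 0 :=
      fun p => by rw [phi_invphi hinv g p, add_zero]
    rw [ExtF_translation htri hemb hdense hσ x, add_zero]
  have hid2 : ∀ (g : G) x, ExtF emb (invphi g) (ExtF emb (phi g) x) = x := by
    intro g x
    rw [ExtF_comp htri hemb hdense (hiφ g) (hφ g) (hiφs g) (hφs g)]
    have hσ : ∀ p, emb (invphi g (phi g p)) = emb p + 0 :=
      fun p => by rw [invphi_phi hinv g p, add_zero]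
    rw [ExtF_translation htri hemb hdense hσ x, add_zero]
  have hFsurj : ∀ g : G, Function.Surjective (ExtF emb (phi g)) :=
    fun g y => ⟨ExtF emb (invphi g) y, hid1 g y⟩
  have hF'surj : ∀ g : G, Function.Surjective (ExtF emb (invphi g)) :=
    fun g y => ⟨ExtF emb (phi g) y, hid2 g y⟩
  have hFcont : ∀ g : G, Continuous (ExtF emb (phi g)) := by
    intro g
    have h := (StrictMono.orderIsoOfSurjective _ (hFmono g) (hFsurj g)).continuous
    rwa [StrictMono.coe_orderIsoOfSurjective] at h
  have hF'cont : ∀ g : G, Continuous (ExtF emb (invphi g)) := by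
    intro g
    have h := (StrictMono.orderIsoOfSurjective _ (hF'mono g) (hF'surj g)).continuous
    rwa [StrictMono.coe_orderIsoOfSurjective] at h
  -- descend to the circle
  let ρfun : G → (AddCircle (1:ℝ) ≃ₜ AddCircle (1:ℝ)) := fun g =>
    ⟨⟨descend (ExtF emb (phi g)) (hFequi g), descend (ExtF emb (invphi g)) (hF'equi g),
      fun z => by
        induction z using QuotientAddGroup.induction_on with
        | H x => rw [descend_mk, descend_mk, hid2 g x],
      fun z => by
        induction z using QuotientAddGroup.induction_on with
        | H x => rw [descend_mk, descend_mk, hid1 g x]⟩,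
      descend_continuous (hFequi g) (hFcont g), descend_continuous (hF'equi g) (hF'cont g)⟩
  have hρ_mk : ∀ (g : G) (x : ℝ), ρfun g ((x : ℝ) : AddCircle (1:ℝ))
      = ((ExtF emb (phi g) x : ℝ) : AddCircle (1:ℝ)) := fun g x => rfl
  have hρmul : ∀ g h : G, ρfun (g * h) = ρfun g * ρfun h := by
    intro g h
    obtain ⟨e, he⟩ := phi_mul hinv g h
    apply Homeomorph.ext
    intro z
    induction z using QuotientAddGroup.induction_on with
    | H x =>
      have hrhs : (ρfun g * ρfun h) ((x : ℝ) : AddCircle (1:ℝ))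
          = ρfun g (ρfun h ((x : ℝ) : AddCircle (1:ℝ))) := rfl
      rw [hrhs, hρ_mk, hρ_mk, hρ_mk]
      have h1 : ExtF emb (phi g) (ExtF emb (phi h) x)
          = ExtF emb (phi (g * h)) x + (e : ℝ) := by
        rw [ExtF_comp htri hemb hdense (hφ g) (hφ h) (hφs g) (hφs h) x]
        have hfun : (fun p => phi g (phi h p)) = fun p => eshift e (phi (g * h) p) :=
          funext he
        rw [hfun,
          ← ExtF_comp htri hemb hdense (hesm e) (hφ (g * h)) (hess e) (hφs (g * h)) x,
          ExtF_translation htri hemb hdense (fun p => hes e p) _]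
      rw [h1, mk_add_int]
  refine ⟨MonoidHom.mk' ρfun hρmul, ?_, ?_⟩
  · refine (injective_iff_map_eq_one _).2 ?_
    intro g hg
    have hz : ρfun g ((jr ((1:G), (0:ℚ)) : ℝ) : AddCircle (1:ℝ))
        = ((jr ((1:G), (0:ℚ)) : ℝ) : AddCircle (1:ℝ)) := by
      have : (MonoidHom.mk' ρfun hρmul) g = 1 := hg
      rw [show ρfun g = (MonoidHom.mk' ρfun hρmul) g from rfl, this]
      rfl
    have hpt : jr ((1:G), (0:ℚ)) = emb ((0:ℤ), ((1:G), (0:ℚ))) := by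
      show jr ((1:G), (0:ℚ)) = ((0:ℤ):ℝ) + jr ((1:G), (0:ℚ))
      simp
    have h2 : phi g ((0:ℤ), ((1:G), (0:ℚ))) = ((0:ℤ), (g, (0:ℚ))) := by
      simp [phi, cz_base]
    have h1 : ExtF emb (phi g) (jr ((1:G), (0:ℚ))) = jr (g, (0:ℚ)) := by
      rw [hpt, ExtF_apply htri hemb hdense (hφ g), h2]
      show ((0:ℤ):ℝ) + jr (g, (0:ℚ)) = jr (g, (0:ℚ))
      simp
    rw [hρ_mk, h1] at hz
    rw [QuotientAddGroup.eq_iff_sub_mem] at hz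
    obtain ⟨k, hk⟩ := hz
    have hk' : (k : ℝ) = jr (g, (0:ℚ)) - jr ((1:G), (0:ℚ)) := by
      simpa using hk
    have hb1 := hjmem (g, (0:ℚ))
    have hb2 := hjmem ((1:G), (0:ℚ))
    have hbd1 : (k:ℝ) < 1 := by
      rw [hk']
      have := hb1.2
      have := hb2.1
      simp only [Set.mem_Ioo] at hb1 hb2
      linarith
    have hbd2 : (-1:ℝ) < (k:ℝ) := by
      rw [hk']
      simp only [Set.mem_Ioo] at hb1 hb2
      linarith
    have hk0 : k = 0 := by
      have h1' : k < 1 := by exact_mod_cast hbd1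
      have h2' : -1 < k := by exact_mod_cast hbd2
      omega
    rw [hk0] at hk'
    have hjeq : jr (g, (0:ℚ)) = jr ((1:G), (0:ℚ)) := by
      simp only [Int.cast_zero] at hk'
      linarith
    rcases llt_trichotomy (G := G) (g, (0:ℚ)) ((1:G), (0:ℚ)) with h | h | h
    · exact congrArg Prod.fst h
    · exact absurd (hjmono h) (by rw [hjeq]; exact lt_irrefl _)
    · exact absurd (hjmono h) (by rw [hjeq]; exact lt_irrefl _)
  · intro g a b c h
    induction a using QuotientAddGroup.induction_on with
    | H x =>
    induction b using QuotientAddGroup.induction_on with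
    | H y =>
    induction c using QuotientAddGroup.induction_on with
    | H z =>
    have hx : (MonoidHom.mk' ρfun hρmul) g ((x : ℝ) : AddCircle (1:ℝ))
        = ((ExtF emb (phi g) x : ℝ) : AddCircle (1:ℝ)) := hρ_mk g x
    have hy := hρ_mk g y
    have hz := hρ_mk g z
    show btw ((MonoidHom.mk' ρfun hρmul) g _) ((MonoidHom.mk' ρfun hρmul) g _)
      ((MonoidHom.mk' ρfun hρmul) g _)
    rw [show ((MonoidHom.mk' ρfun hρmul) g : AddCircle (1:ℝ) ≃ₜ AddCircle (1:ℝ)) = ρfun g from rfl,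
      hρ_mk, hρ_mk, hρ_mk]
    exact descend_btw (hFequi g) (hFmono g) x y z h
end

section
/- Every group acting faithfully on the circle by orientation-preserving homeomorphisms admits a left-invariant circular order: if G is a group and ρ : G →* Homeomorph (AddCircle (1:ℝ)) (AddCircle (1:ℝ)) is an injective group homomorphism such that each ρ(g) preserves the betweenness relation btw of the circular order on AddCircle (1:ℝ), then there exists a circular order on G whose betweenness relation btw satisfies btw a b c → btw (g*a) (g*b) (g*c) for all g, a, b, c ∈ G. -/
namespace CO25

variable {α : Type*} [CircularOrder α]

/-- The linear "cut" order on a circular order, cutting at `q` (with `q` least). -/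
def ltq (q x y : α) : Prop := x ≠ y ∧ (x = q ∨ (y ≠ q ∧ sbtw q x y))

theorem sbtw_ne {x y z : α} (h : sbtw x y z) : x ≠ y ∧ y ≠ z ∧ z ≠ x := by
  refine ⟨?_, ?_, ?_⟩
  · rintro rfl; exact sbtw_irrefl_left h
  · rintro rfl; exact sbtw_irrefl_right h
  · rintro rfl; exact sbtw_irrefl_left_right h

theorem sbtw_total3 {x y z : α} (hxy : x ≠ y) (hyz : y ≠ z) (hzx : z ≠ x) :
    sbtw x y z ∨ sbtw z y x := by
  by_cases h : btw z y x
  · right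
    refine sbtw_iff_btw_not_btw.2 ⟨h, fun h' => ?_⟩
    rcases Btw.btw.antisymm h' h with e | e | e
    exacts [hxy e, hyz e, hzx e]
  · left; exact sbtw_iff_not_btw.2 h

theorem sbtw_pivot {q x y z : α} (h1 : sbtw q x y) (h2 : sbtw q y z) : sbtw q x z :=
  sbtw_cyclic_right (SBtw.sbtw.trans_left (sbtw_cyclic_left h1) (sbtw_cyclic_left h2))

theorem ltq_total {q x y : α} (h : x ≠ y) : ltq q x y ∨ ltq q y x := by
  by_cases hx : x = q
  · exact Or.inl ⟨h, Or.inl hx⟩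
  by_cases hy : y = q
  · exact Or.inr ⟨h.symm, Or.inl hy⟩
  rcases sbtw_total3 (fun e => hx e.symm) h hy with hs | hs
  · exact Or.inl ⟨h, Or.inr ⟨hy, hs⟩⟩
  · exact Or.inr ⟨h.symm, Or.inr ⟨hx, sbtw_cyclic_left (sbtw_cyclic_left hs)⟩⟩

theorem ltq_asymm {q x y : α} (h1 : ltq q x y) (h2 : ltq q y x) : False := by
  obtain ⟨hxy, h1⟩ := h1
  obtain ⟨hyx, h2⟩ := h2
  rcases h1 with rfl | ⟨hy, hs1⟩
  · rcases h2 with h | ⟨hx, _⟩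
    · exact hxy h.symm
    · exact hx rfl
  · rcases h2 with rfl | ⟨_, hs2⟩
    · exact hy rfl
    · exact sbtw_asymm hs1 (sbtw_cyclic_left hs2)

theorem ltq_trans {q x y z : α} (h1 : ltq q x y) (h2 : ltq q y z) : ltq q x z := by
  obtain ⟨hxy, h1⟩ := h1
  obtain ⟨hyz, h2⟩ := h2
  rcases h1 with rfl | ⟨hy, hs1⟩
  · rcases h2 with rfl | ⟨hz, _⟩
    · exact absurd rfl hxy
    · exact ⟨fun e => hz e.symm, Or.inl rfl⟩
  · rcases h2 with rfl | ⟨hz, hs2⟩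
    · exact absurd rfl hy
    · have hs := sbtw_pivot hs1 hs2
      exact ⟨(sbtw_ne hs).2.1, Or.inr ⟨hz, hs⟩⟩

/-- Cyclic order induced on a fiber by a strict linear order. -/
def cyc3 {β : Type*} (s : β → β → Prop) (a b c : β) : Prop :=
  (s a b ∧ s b c) ∨ (s b c ∧ s c a) ∨ (s c a ∧ s a b)

theorem cyc3_rot {β : Type*} {s : β → β → Prop} {a b c : β} (h : cyc3 s a b c) :
    cyc3 s b c a := by unfold cyc3 at *; tauto

theorem cyc3_asymm {β : Type*} {s : β → β → Prop}
    (asym : ∀ x y, s x y → s y x → False) {a b c : β}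
    (h1 : cyc3 s a b c) (h2 : cyc3 s c b a) : False := by
  rcases h1 with ⟨p1, p2⟩ | ⟨p1, p2⟩ | ⟨p1, p2⟩ <;>
    rcases h2 with ⟨q1, q2⟩ | ⟨q1, q2⟩ | ⟨q1, q2⟩ <;>
      first
        | exact asym _ _ p1 q1 | exact asym _ _ p1 q2
        | exact asym _ _ p2 q1 | exact asym _ _ p2 q2

theorem cyc3_total {β : Type*} {s : β → β → Prop} {a b c : β}
    (hab : s a b ∨ s b a) (hbc : s b c ∨ s c b) (hca : s c a ∨ s a c) :
    cyc3 s a b c ∨ cyc3 s c b a := by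
  unfold cyc3; tauto

theorem cyc3_trans {β : Type*} {s : β → β → Prop}
    (asym : ∀ x y, s x y → s y x → False)
    (tr : ∀ x y z, s x y → s y z → s x z) {a b c d : β}
    (h1 : cyc3 s a b c) (h2 : cyc3 s b d c) : cyc3 s a d c := by
  rcases h1 with ⟨p1, p2⟩ | ⟨p1, p2⟩ | ⟨p1, p2⟩ <;>
    rcases h2 with ⟨q1, q2⟩ | ⟨q1, q2⟩ | ⟨q1, q2⟩
  · exact Or.inl ⟨tr _ _ _ p1 q1, q2⟩
  · exact absurd p2 fun h => asym _ _ h q2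
  · exact absurd p2 fun h => asym _ _ h q1
  · exact Or.inr (Or.inl ⟨q2, p2⟩)
  · exact absurd p1 fun h => asym _ _ h q2
  · exact absurd p1 fun h => asym _ _ h q1
  · exact Or.inl ⟨tr _ _ _ p2 q1, q2⟩
  · exact Or.inr (Or.inl ⟨q1, p1⟩)
  · exact Or.inr (Or.inr ⟨p1, tr _ _ _ p2 q2⟩)

variable {G : Type*} [Group G]

/-- Fiber (lexicographic) strict order. -/
def pre (ρ : G →* (AddCircle (1 : ℝ) ≃ₜ AddCircle (1 : ℝ))) (a b : G) : Prop :=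
  (ρ a) 0 = (ρ b) 0 ∧
    ∃ x, (ρ a) x ≠ (ρ b) x ∧ (∀ y, WellOrderingRel y x → (ρ a) y = (ρ b) y) ∧
      ltq ((ρ a) 0) ((ρ a) x) ((ρ b) x)

variable {ρ : G →* (AddCircle (1 : ℝ) ≃ₜ AddCircle (1 : ℝ))}

theorem pre_asymm : ∀ x y : G, pre ρ x y → pre ρ y x → False := by
  rintro a b ⟨h0, x, hx, hlow, hlt⟩ ⟨h0', x', hx', hlow', hlt'⟩
  have hxx : x = x' := by
    rcases trichotomous_of WellOrderingRel x x' with h | h | h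
    · exact absurd (hlow' x h).symm hx
    · exact h
    · exact absurd (hlow x' h).symm hx'
  subst hxx
  rw [h0] at hlt
  exact ltq_asymm hlt hlt'

theorem pre_trans : ∀ x y z : G, pre ρ x y → pre ρ y z → pre ρ x z := by
  rintro a b c ⟨h0, x, hx, hlow, hlt⟩ ⟨h0', x', hx', hlow', hlt'⟩
  refine ⟨h0.trans h0', ?_⟩
  rw [← h0] at hlt'
  rcases trichotomous_of WellOrderingRel x x' with h | h | h
  · exact ⟨x, fun e => hx (e.trans (hlow' x h).symm),
      fun y hy => (hlow y hy).trans (hlow' y (_root_.trans hy h)), (hlow' x h) ▸ hlt⟩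
  · subst h
    have hlt'' := ltq_trans hlt hlt'
    exact ⟨x, hlt''.1, fun y hy => (hlow y hy).trans (hlow' y hy), hlt''⟩
  · exact ⟨x', fun e => hx' ((hlow x' h).symm.trans e),
      fun y hy => (hlow y (_root_.trans hy h)).trans (hlow' y hy), (hlow x' h) ▸ hlt'⟩

theorem pre_total (hinj : Function.Injective ρ) {a b : G} (hne : a ≠ b)
    (h0 : (ρ a) 0 = (ρ b) 0) : pre ρ a b ∨ pre ρ b a := by
  have hD : {x : AddCircle (1 : ℝ) | (ρ a) x ≠ (ρ b) x}.Nonempty := by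
    by_contra h
    rw [Set.not_nonempty_iff_eq_empty, Set.eq_empty_iff_forall_notMem] at h
    simp only [Set.mem_setOf_eq, not_not] at h
    exact hne (hinj (Homeomorph.ext h))
  have hwf : WellFounded (@WellOrderingRel (AddCircle (1 : ℝ))) := IsWellFounded.wf
  set m := hwf.min _ hD with hm_def
  have hm : (ρ a) m ≠ (ρ b) m := hwf.min_mem _ hD
  have hlow : ∀ y, WellOrderingRel y m → (ρ a) y = (ρ b) y := by
    intro y hy
    by_contra h
    exact hwf.not_lt_min _ h hy
  rcases ltq_total (q := (ρ a) 0) hm with h | h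
  · exact Or.inl ⟨h0, m, hm, hlow, h⟩
  · exact Or.inr ⟨h0.symm, m, hm.symm, fun y hy => (hlow y hy).symm, h0 ▸ h⟩

theorem mul_apply (g h : G) (x : AddCircle (1 : ℝ)) : (ρ (g * h)) x = (ρ g) ((ρ h) x) := by
  rw [map_mul]; rfl

theorem cancel_apply (g : G) (x : AddCircle (1 : ℝ)) : (ρ g⁻¹) ((ρ g) x) = x := by
  rw [← mul_apply, inv_mul_cancel, map_one]; rfl

theorem sbtw_map
    (hpos : ∀ (g : G) (a b c : AddCircle (1 : ℝ)), btw a b c → btw ((ρ g) a) ((ρ g) b) ((ρ g) c))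
    (g : G) {x y z : AddCircle (1 : ℝ)} (h : sbtw x y z) :
    sbtw ((ρ g) x) ((ρ g) y) ((ρ g) z) := by
  rw [sbtw_iff_btw_not_btw] at h ⊢
  refine ⟨hpos g _ _ _ h.1, fun hb => h.2 ?_⟩
  have := hpos g⁻¹ _ _ _ hb
  simpa only [cancel_apply] using this

theorem ltq_map
    (hpos : ∀ (g : G) (a b c : AddCircle (1 : ℝ)), btw a b c → btw ((ρ g) a) ((ρ g) b) ((ρ g) c))
    (g : G) {q x y : AddCircle (1 : ℝ)} (h : ltq q x y) :
    ltq ((ρ g) q) ((ρ g) x) ((ρ g) y) := by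
  obtain ⟨hxy, h⟩ := h
  refine ⟨fun e => hxy ((ρ g).injective e), ?_⟩
  rcases h with rfl | ⟨hy, hs⟩
  · exact Or.inl rfl
  · exact Or.inr ⟨fun e => hy ((ρ g).injective e), sbtw_map hpos g hs⟩

theorem pre_inv
    (hpos : ∀ (g : G) (a b c : AddCircle (1 : ℝ)), btw a b c → btw ((ρ g) a) ((ρ g) b) ((ρ g) c))
    (g : G) {a b : G} (h : pre ρ a b) : pre ρ (g * a) (g * b) := by
  obtain ⟨h0, x, hx, hlow, hlt⟩ := h
  refine ⟨by rw [mul_apply, mul_apply, h0], x, ?_, ?_, ?_⟩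
  · rw [mul_apply, mul_apply]
    exact fun e => hx ((ρ g).injective e)
  · intro y hy
    rw [mul_apply, mul_apply, hlow y hy]
  · rw [mul_apply, mul_apply, mul_apply]
    exact ltq_map hpos g hlt

/-- The strict circular order on `G`. -/
def sb (ρ : G →* (AddCircle (1 : ℝ) ≃ₜ AddCircle (1 : ℝ))) (a b c : G) : Prop :=
  sbtw ((ρ a) 0) ((ρ b) 0) ((ρ c) 0)
  ∨ ((ρ a) 0 = (ρ b) 0 ∧ (ρ b) 0 ≠ (ρ c) 0 ∧ pre ρ a b)
  ∨ ((ρ b) 0 = (ρ c) 0 ∧ (ρ c) 0 ≠ (ρ a) 0 ∧ pre ρ b c)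
  ∨ ((ρ c) 0 = (ρ a) 0 ∧ (ρ a) 0 ≠ (ρ b) 0 ∧ pre ρ c a)
  ∨ ((ρ a) 0 = (ρ b) 0 ∧ (ρ b) 0 = (ρ c) 0 ∧ cyc3 (pre ρ) a b c)

theorem sb_rot {a b c : G} (h : sb ρ a b c) : sb ρ b c a := by
  rcases h with h | ⟨e1, e2, h⟩ | ⟨e1, e2, h⟩ | ⟨e1, e2, h⟩ | ⟨e1, e2, h⟩
  · exact Or.inl (sbtw_cyclic_left h)
  · exact Or.inr (Or.inr (Or.inr (Or.inl ⟨e1, e2, h⟩)))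
  · exact Or.inr (Or.inl ⟨e1, e2, h⟩)
  · exact Or.inr (Or.inr (Or.inl ⟨e1, e2, h⟩))
  · exact Or.inr (Or.inr (Or.inr (Or.inr ⟨e2, (e1.trans e2).symm, cyc3_rot h⟩)))

theorem sb_elim_distinct {a b c : G} (h : sb ρ a b c)
    (eab : (ρ a) 0 ≠ (ρ b) 0) (ebc : (ρ b) 0 ≠ (ρ c) 0) (eca : (ρ c) 0 ≠ (ρ a) 0) :
    sbtw ((ρ a) 0) ((ρ b) 0) ((ρ c) 0) := by
  rcases h with h | ⟨e, _, _⟩ | ⟨e, _, _⟩ | ⟨e, _, _⟩ | ⟨e, _, _⟩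
  exacts [h, absurd e eab, absurd e ebc, absurd e eca, absurd e eab]

theorem sb_elim_ab {a b c : G} (h : sb ρ a b c)
    (eab : (ρ a) 0 = (ρ b) 0) (ebc : (ρ b) 0 ≠ (ρ c) 0) : pre ρ a b := by
  rcases h with h | ⟨_, _, h⟩ | ⟨e, _, _⟩ | ⟨_, e, _⟩ | ⟨_, e, _⟩
  exacts [absurd eab (sbtw_ne h).1, h, absurd e ebc, absurd eab e, absurd e ebc]

theorem sb_elim_bc {a b c : G} (h : sb ρ a b c)
    (ebc : (ρ b) 0 = (ρ c) 0) (eca : (ρ c) 0 ≠ (ρ a) 0) : pre ρ b c := by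
  rcases h with h | ⟨e1, e2, _⟩ | ⟨_, _, h⟩ | ⟨e, _, _⟩ | ⟨e1, _, _⟩
  exacts [absurd ebc (sbtw_ne h).2.1, absurd ebc e2, h, absurd e eca,
    absurd (e1.trans ebc).symm eca]

theorem sb_elim_ca {a b c : G} (h : sb ρ a b c)
    (eca : (ρ c) 0 = (ρ a) 0) (eab : (ρ a) 0 ≠ (ρ b) 0) : pre ρ c a := by
  rcases h with h | ⟨e, _, _⟩ | ⟨_, e, _⟩ | ⟨_, _, h⟩ | ⟨e, _, _⟩
  exacts [absurd eca (sbtw_ne h).2.2, absurd e eab, absurd eca e, h, absurd e eab]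

theorem sb_elim_all {a b c : G} (h : sb ρ a b c)
    (eab : (ρ a) 0 = (ρ b) 0) (ebc : (ρ b) 0 = (ρ c) 0) : cyc3 (pre ρ) a b c := by
  rcases h with h | ⟨_, e, _⟩ | ⟨_, e, _⟩ | ⟨_, e, _⟩ | ⟨_, _, h⟩
  exacts [absurd eab (sbtw_ne h).1, absurd ebc e, absurd (eab.trans ebc).symm e,
    absurd eab e, h]

theorem sb_asymm {a b c : G} (h1 : sb ρ a b c) (h2 : sb ρ c b a) : False := by
  by_cases eab : (ρ a) 0 = (ρ b) 0 <;> by_cases ebc : (ρ b) 0 = (ρ c) 0 <;>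
    by_cases eca : (ρ c) 0 = (ρ a) 0
  · exact cyc3_asymm pre_asymm (sb_elim_all h1 eab ebc) (sb_elim_all h2 ebc.symm eab.symm)
  · exact eca (ebc.symm.trans eab.symm)
  · exact ebc (eab.symm.trans eca.symm)
  · exact pre_asymm _ _ (sb_elim_ab h1 eab ebc) (sb_elim_bc h2 eab.symm (fun e => eca e.symm))
  · exact eab (eca.symm.trans ebc.symm)
  · exact pre_asymm _ _ (sb_elim_bc h1 ebc eca) (sb_elim_ab h2 ebc.symm (fun e => eab e.symm))
  · exact pre_asymm _ _ (sb_elim_ca h1 eca eab) (sb_elim_ca h2 eca.symm (fun e => ebc e.symm))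
  · exact sbtw_asymm (sb_elim_distinct h1 eab ebc eca)
      (sb_elim_distinct h2 (fun e => ebc e.symm) (fun e => eab e.symm) (fun e => eca e.symm))

theorem sb_total (hinj : Function.Injective ρ) {a b c : G}
    (hab : a ≠ b) (hbc : b ≠ c) (hca : c ≠ a) : sb ρ a b c ∨ sb ρ c b a := by
  by_cases eab : (ρ a) 0 = (ρ b) 0 <;> by_cases ebc : (ρ b) 0 = (ρ c) 0 <;>
    by_cases eca : (ρ c) 0 = (ρ a) 0
  · rcases cyc3_total (pre_total hinj hab eab) (pre_total hinj hbc ebc)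
        (pre_total hinj hca eca) with h | h
    · exact Or.inl (Or.inr (Or.inr (Or.inr (Or.inr ⟨eab, ebc, h⟩))))
    · exact Or.inr (Or.inr (Or.inr (Or.inr (Or.inr ⟨ebc.symm, eab.symm, h⟩))))
  · exact absurd (eab.trans ebc).symm eca
  · exact absurd (eab.symm.trans eca.symm) ebc
  · rcases pre_total hinj hab eab with h | h
    · exact Or.inl (Or.inr (Or.inl ⟨eab, ebc, h⟩))
    · exact Or.inr (Or.inr (Or.inr (Or.inl ⟨eab.symm, fun e => eca e.symm, h⟩)))
  · exact absurd (eca.symm.trans ebc.symm) eab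
  · rcases pre_total hinj hbc ebc with h | h
    · exact Or.inl (Or.inr (Or.inr (Or.inl ⟨ebc, eca, h⟩)))
    · exact Or.inr (Or.inr (Or.inl ⟨ebc.symm, fun e => eab e.symm, h⟩))
  · rcases pre_total hinj hca eca with h | h
    · exact Or.inl (Or.inr (Or.inr (Or.inr (Or.inl ⟨eca, eab, h⟩))))
    · exact Or.inr (Or.inr (Or.inr (Or.inr (Or.inl ⟨eca.symm, fun e => ebc e.symm, h⟩))))
  · rcases sbtw_total3 eab ebc eca with h | h
    · exact Or.inl (Or.inl h)
    · exact Or.inr (Or.inl h)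

theorem sb_trans {a b c d : G} (h1 : sb ρ a b c) (h2 : sb ρ b d c) : sb ρ a d c := by
  by_cases eab : (ρ a) 0 = (ρ b) 0 <;> by_cases ebc : (ρ b) 0 = (ρ c) 0 <;>
    by_cases eca : (ρ c) 0 = (ρ a) 0
  · -- all of a, b, c in one fiber
    have hc1 := sb_elim_all h1 eab ebc
    by_cases ebd : (ρ b) 0 = (ρ d) 0
    · have hc2 := sb_elim_all h2 ebd (ebd.symm.trans ebc)
      exact Or.inr (Or.inr (Or.inr (Or.inr ⟨eab.trans ebd, ebd.symm.trans ebc,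
        cyc3_trans pre_asymm pre_trans hc1 hc2⟩)))
    · have hcb := sb_elim_ca h2 ebc.symm ebd
      have hca : pre ρ c a := by
        rcases hc1 with ⟨p1, p2⟩ | ⟨p1, p2⟩ | ⟨p1, p2⟩
        · exact absurd p2 (fun h => pre_asymm _ _ h hcb)
        · exact absurd p1 (fun h => pre_asymm _ _ h hcb)
        · exact p1
      exact Or.inr (Or.inr (Or.inr (Or.inl ⟨(eab.trans ebc).symm,
        fun e => ebd (eab.symm.trans e), hca⟩)))
  · exact absurd (eab.trans ebc).symm eca
  · exact absurd (eab.symm.trans eca.symm) ebc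
  · -- fiber of a equals fiber of b, c elsewhere
    have hab := sb_elim_ab h1 eab ebc
    by_cases ebd : (ρ b) 0 = (ρ d) 0
    · by_cases edc : (ρ d) 0 = (ρ c) 0
      · exact absurd (ebd.trans edc) ebc
      · have hbd := sb_elim_ab h2 ebd edc
        exact Or.inr (Or.inl ⟨eab.trans ebd, edc, pre_trans _ _ _ hab hbd⟩)
    · by_cases edc : (ρ d) 0 = (ρ c) 0
      · have hdc := sb_elim_bc h2 edc (fun e => ebc e.symm)
        exact Or.inr (Or.inr (Or.inl ⟨edc, eca, hdc⟩))
      · have hs2 := sb_elim_distinct h2 ebd edc (fun e => ebc e.symm)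
        exact Or.inl (by rw [eab]; exact hs2)
  · exact absurd (eca.symm.trans ebc.symm) eab
  · -- fibers of b and c coincide, a elsewhere
    have hbc := sb_elim_bc h1 ebc eca
    by_cases ebd : (ρ b) 0 = (ρ d) 0
    · have hc2 := sb_elim_all h2 ebd (ebd.symm.trans ebc)
      have hdc : pre ρ d c := by
        rcases hc2 with ⟨p1, p2⟩ | ⟨p1, p2⟩ | ⟨p1, p2⟩
        · exact p2
        · exact p1
        · exact absurd p1 (fun h => pre_asymm _ _ h hbc)
      exact Or.inr (Or.inr (Or.inl ⟨ebd.symm.trans ebc, eca, hdc⟩))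
    · have hcb := sb_elim_ca h2 ebc.symm ebd
      exact absurd hbc (fun h => pre_asymm _ _ h hcb)
  · -- fibers of c and a coincide, b elsewhere
    have hca := sb_elim_ca h1 eca eab
    by_cases ebd : (ρ b) 0 = (ρ d) 0
    · by_cases edc : (ρ d) 0 = (ρ c) 0
      · exact absurd (ebd.trans edc) ebc
      · exact Or.inr (Or.inr (Or.inr (Or.inl ⟨eca, fun e => eab (e.trans ebd.symm), hca⟩)))
    · by_cases edc : (ρ d) 0 = (ρ c) 0
      · have hdc := sb_elim_bc h2 edc (fun e => ebc e.symm)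
        exact Or.inr (Or.inr (Or.inr (Or.inr ⟨(edc.trans eca).symm, edc,
          Or.inr (Or.inl ⟨hdc, hca⟩)⟩)))
      · exact Or.inr (Or.inr (Or.inr (Or.inl ⟨eca,
          fun e => edc (e.symm.trans eca.symm), hca⟩)))
  · -- all three fibers distinct
    have hs1 := sb_elim_distinct h1 eab ebc eca
    by_cases ebd : (ρ b) 0 = (ρ d) 0
    · by_cases edc : (ρ d) 0 = (ρ c) 0
      · exact absurd (ebd.trans edc) ebc
      · exact Or.inl (by rw [← ebd]; exact hs1)
    · by_cases edc : (ρ d) 0 = (ρ c) 0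
      · have hdc := sb_elim_bc h2 edc (fun e => ebc e.symm)
        exact Or.inr (Or.inr (Or.inl ⟨edc, eca, hdc⟩))
      · have hs2 := sb_elim_distinct h2 ebd edc (fun e => ebc e.symm)
        by_cases eaw : (ρ a) 0 = (ρ d) 0
        · rw [← eaw] at hs2
          exact absurd (sbtw_cyclic_left (sbtw_cyclic_left hs2)) (sbtw_asymm hs1)
        · exact Or.inl (SBtw.sbtw.trans_left hs1 hs2)

theorem sb_inv
    (hpos : ∀ (g : G) (a b c : AddCircle (1 : ℝ)), btw a b c → btw ((ρ g) a) ((ρ g) b) ((ρ g) c))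
    (g : G) {a b c : G} (h : sb ρ a b c) : sb ρ (g * a) (g * b) (g * c) := by
  have inj : Function.Injective (ρ g) := (ρ g).injective
  have cyc3_inv : ∀ {x y z : G}, cyc3 (pre ρ) x y z → cyc3 (pre ρ) (g * x) (g * y) (g * z) := by
    rintro x y z (⟨p1, p2⟩ | ⟨p1, p2⟩ | ⟨p1, p2⟩)
    · exact Or.inl ⟨pre_inv hpos g p1, pre_inv hpos g p2⟩
    · exact Or.inr (Or.inl ⟨pre_inv hpos g p1, pre_inv hpos g p2⟩)
    · exact Or.inr (Or.inr ⟨pre_inv hpos g p1, pre_inv hpos g p2⟩)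
  rcases h with h | ⟨e1, e2, h⟩ | ⟨e1, e2, h⟩ | ⟨e1, e2, h⟩ | ⟨e1, e2, h⟩
  · exact Or.inl (by rw [mul_apply, mul_apply, mul_apply]; exact sbtw_map hpos g h)
  · exact Or.inr (Or.inl ⟨by rw [mul_apply, mul_apply, e1],
      by rw [mul_apply, mul_apply]; exact fun e => e2 (inj e), pre_inv hpos g h⟩)
  · exact Or.inr (Or.inr (Or.inl ⟨by rw [mul_apply, mul_apply, e1],
      by rw [mul_apply, mul_apply]; exact fun e => e2 (inj e), pre_inv hpos g h⟩))
  · exact Or.inr (Or.inr (Or.inr (Or.inl ⟨by rw [mul_apply, mul_apply, e1],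
      by rw [mul_apply, mul_apply]; exact fun e => e2 (inj e), pre_inv hpos g h⟩)))
  · exact Or.inr (Or.inr (Or.inr (Or.inr ⟨by rw [mul_apply, mul_apply, e1],
      by rw [mul_apply, mul_apply, e2], cyc3_inv h⟩)))

end CO25

/-- Every group acting faithfully on the circle by orientation-preserving
homeomorphisms admits a left-invariant circular order. -/
theorem circular_order_of_faithful_circle_action
    (G : Type*) [Group G]
    (ρ : G →* Homeomorph (AddCircle (1 : ℝ)) (AddCircle (1 : ℝ)))
    (hinj : Function.Injective ρ)
    (hpos : ∀ (g : G) (a b c : AddCircle (1 : ℝ)),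
      btw a b c → btw (ρ g a) (ρ g b) (ρ g c)) :
    ∃ co : CircularOrder G,
      ∀ g a b c : G, co.btw a b c → co.btw (g * a) (g * b) (g * c) := by
  classical
  refine ⟨{ btw := fun a b c => a = b ∨ b = c ∨ c = a ∨ CO25.sb ρ a b c
            sbtw := fun a b c => (a = b ∨ b = c ∨ c = a ∨ CO25.sb ρ a b c) ∧
              ¬(c = b ∨ b = a ∨ a = c ∨ CO25.sb ρ c b a)
            btw_refl := fun a => Or.inl rfl
            btw_cyclic_left := ?_
            sbtw_iff_btw_not_btw := Iff.rfl
            sbtw_trans_left := ?_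
            btw_antisymm := ?_
            btw_total := ?_ }, ?_⟩
  · rintro a b c (rfl | rfl | rfl | h)
    · exact Or.inr (Or.inr (Or.inl rfl))
    · exact Or.inl rfl
    · exact Or.inr (Or.inl rfl)
    · exact Or.inr (Or.inr (Or.inr (CO25.sb_rot h)))
  · rintro a b c d ⟨hb1, hn1⟩ ⟨hb2, hn2⟩
    simp only [not_or] at hn1 hn2
    have hs1 : CO25.sb ρ a b c := by
      rcases hb1 with e | e | e | h
      · exact absurd e.symm hn1.2.1
      · exact absurd e.symm hn1.1
      · exact absurd e.symm hn1.2.2.1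
      · exact h
    have hs2 : CO25.sb ρ b d c := by
      rcases hb2 with e | e | e | h
      · exact absurd e.symm hn2.2.1
      · exact absurd e.symm hn2.1
      · exact absurd e.symm hn2.2.2.1
      · exact h
    have hs3 := CO25.sb_trans hs1 hs2
    refine ⟨Or.inr (Or.inr (Or.inr hs3)), ?_⟩
    rintro (e | e | e | h)
    · exact hn2.1 e
    · exact CO25.sb_asymm hs1 (CO25.sb_rot (CO25.sb_rot (e ▸ hs2)))
    · exact hn1.2.2.1 e
    · exact CO25.sb_asymm hs3 h
  · rintro a b c (rfl | rfl | rfl | h1) h2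
    · exact Or.inl rfl
    · exact Or.inr (Or.inl rfl)
    · exact Or.inr (Or.inr rfl)
    · rcases h2 with e | e | e | h2
      · exact Or.inr (Or.inl e.symm)
      · exact Or.inl e.symm
      · exact Or.inr (Or.inr e.symm)
      · exact absurd h2 (fun h => CO25.sb_asymm h1 h)
  · intro a b c
    by_cases hab : a = b
    · exact Or.inl (Or.inl hab)
    by_cases hbc : b = c
    · exact Or.inl (Or.inr (Or.inl hbc))
    by_cases hca : c = a
    · exact Or.inl (Or.inr (Or.inr (Or.inl hca)))
    rcases CO25.sb_total hinj hab hbc hca with h | h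
    · exact Or.inl (Or.inr (Or.inr (Or.inr h)))
    · exact Or.inr (Or.inr (Or.inr (Or.inr h)))
  · rintro g a b c (rfl | rfl | rfl | h)
    · exact Or.inl rfl
    · exact Or.inr (Or.inl rfl)
    · exact Or.inr (Or.inr (Or.inl rfl))
    · exact Or.inr (Or.inr (Or.inr (CO25.sb_inv hpos g h)))
end

section
/- An action of a group on the real line by order isomorphisms that has one orbit bounded above has a global fixed point: if G is a group, ρ : G →* (ℝ ≃o ℝ), and there exists x ∈ ℝ such that the set { (ρ g)(x) | g ∈ G } is bounded above, then there exists y ∈ ℝ with (ρ g)(y) = y for all g ∈ G. -/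
/-- An action of a group on the real line by order isomorphisms with an orbit
bounded above has a global fixed point. -/
theorem fixed_point_of_bddAbove_orbit
    {G : Type*} [Group G] (ρ : G →* (ℝ ≃o ℝ))
    (hbdd : ∃ x : ℝ, BddAbove (Set.range fun g : G => ρ g x)) :
    ∃ y : ℝ, ∀ g : G, ρ g y = y := by
  obtain ⟨x, hbdd⟩ := hbdd
  set S : Set ℝ := Set.range fun g : G => ρ g x with hS
  have key : ∀ g h : G, ρ g (ρ h x) = ρ (g * h) x := by
    intro g h
    rw [map_mul]
    rfl
  have hne : S.Nonempty := ⟨ρ 1 x, ⟨1, rfl⟩⟩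
  refine ⟨sSup S, fun g => ?_⟩
  have himg : (ρ g) '' S = S := by
    ext y
    constructor
    · rintro ⟨_, ⟨h, rfl⟩, rfl⟩
      exact ⟨g * h, (key g h).symm⟩
    · rintro ⟨h, rfl⟩
      exact ⟨ρ (g⁻¹ * h) x, ⟨g⁻¹ * h, rfl⟩, by rw [key, mul_inv_cancel_left]⟩
  rw [(ρ g).map_csSup' hne hbdd, himg]
end

section
/- The second integral group homology of the Klein four-group is ℤ/2: the abelian group H₂(ℤ/2 × ℤ/2; ℤ), i.e. the degree-2 group homology of the group ZMod 2 × ZMod 2 with coefficients in the trivial representation ℤ, is isomorphic to ℤ/2. -/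
/-! Second integral group homology of an additive group `G`, defined concretely
via the inhomogeneous bar complex with trivial `ℤ` coefficients:
`H₂(G;ℤ) = ker d₁ / im d₂` where
`d₁(g,h) = [h] - [g+h] + [g]` and
`d₂(g,h,k) = [(h,k)] - [(g+h,k)] + [(g,h+k)] - [(g,h)]`. -/

variable (G : Type*) [AddGroup G]

/-- The boundary map from 2-chains to 1-chains of the bar complex of `G`
with trivial `ℤ` coefficients. -/
noncomputable def barD1 : ((G × G) →₀ ℤ) →+ (G →₀ ℤ) :=
  Finsupp.liftAddHom fun p => zmultiplesHom _
    (Finsupp.single p.2 1 - Finsupp.single (p.1 + p.2) 1 + Finsupp.single p.1 1)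

/-- The boundary map from 3-chains to 2-chains of the bar complex of `G`
with trivial `ℤ` coefficients. -/
noncomputable def barD2 : ((G × G × G) →₀ ℤ) →+ ((G × G) →₀ ℤ) :=
  Finsupp.liftAddHom fun t => zmultiplesHom _
    (Finsupp.single (t.2.1, t.2.2) 1 - Finsupp.single (t.1 + t.2.1, t.2.2) 1
      + Finsupp.single (t.1, t.2.1 + t.2.2) 1 - Finsupp.single (t.1, t.2.1) 1)

/-- The second group homology `H₂(G;ℤ)` with coefficients in the trivial
`G`-representation `ℤ`: 2-cycles modulo 2-boundaries in the bar complex. -/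
noncomputable def groupHomologyTwo : Type _ :=
  (barD1 G).ker ⧸ ((barD2 G).range.addSubgroupOf (barD1 G).ker)

noncomputable instance : AddCommGroup (groupHomologyTwo G) :=
  inferInstanceAs (AddCommGroup
    ((barD1 G).ker ⧸ ((barD2 G).range.addSubgroupOf (barD1 G).ker)))


namespace H2K4Aux

abbrev K4 := ZMod 2 × ZMod 2

def k00 : K4 := (0, 0)
def k10 : K4 := (1, 0)
def k01 : K4 := (0, 1)
def k11 : K4 := (1, 1)

/-- the cycle `z = [a|b] - [b|a]` generating `H₂`. -/
noncomputable def zc : (K4 × K4) →₀ ℤ :=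
  Finsupp.single (k10, k01) 1 - Finsupp.single (k01, k10) 1

/-- a 3-chain with boundary `2 • zc`. -/
noncomputable def cc : (K4 × K4 × K4) →₀ ℤ :=
  Finsupp.single (k00, k00, k01) (1) + Finsupp.single (k10, k10, k01) (1) + Finsupp.single (k10, k01, k10) (-1) + Finsupp.single (k01, k00, k00) (1) + Finsupp.single (k01, k10, k10) (1)

noncomputable def uVec (p : K4 × K4) : (K4 × K4) →₀ ℤ :=
  if p = (k00, k00) then Finsupp.single (k00, k00) (1) + Finsupp.single (k11, k10) (-1) + Finsupp.single (k11, k01) (-1) + Finsupp.single (k11, k11) (1)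
  else if p = (k00, k10) then Finsupp.single (k00, k10) (1) + Finsupp.single (k11, k10) (-1) + Finsupp.single (k11, k01) (-1) + Finsupp.single (k11, k11) (1)
  else if p = (k00, k01) then Finsupp.single (k00, k01) (1) + Finsupp.single (k11, k10) (-1) + Finsupp.single (k11, k01) (-1) + Finsupp.single (k11, k11) (1)
  else if p = (k00, k11) then Finsupp.single (k00, k11) (1) + Finsupp.single (k11, k10) (-1) + Finsupp.single (k11, k01) (-1) + Finsupp.single (k11, k11) (1)
  else if p = (k10, k00) then Finsupp.single (k10, k00) (1) + Finsupp.single (k11, k10) (-1) + Finsupp.single (k11, k01) (-1) + Finsupp.single (k11, k11) (1)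
  else if p = (k10, k10) then Finsupp.single (k10, k10) (1) + Finsupp.single (k01, k01) (-1) + Finsupp.single (k11, k10) (-1) + Finsupp.single (k11, k01) (1)
  else if p = (k10, k01) then Finsupp.single (k10, k01) (1) + Finsupp.single (k01, k01) (-1) + Finsupp.single (k11, k10) (-1) + Finsupp.single (k11, k11) (1)
  else if p = (k10, k11) then Finsupp.single (k10, k11) (1) + Finsupp.single (k11, k10) (-1)
  else if p = (k01, k00) then Finsupp.single (k01, k00) (1) + Finsupp.single (k11, k10) (-1) + Finsupp.single (k11, k01) (-1) + Finsupp.single (k11, k11) (1)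
  else if p = (k01, k10) then Finsupp.single (k01, k10) (1) + Finsupp.single (k01, k01) (-1) + Finsupp.single (k11, k10) (-1) + Finsupp.single (k11, k11) (1)
  else if p = (k01, k11) then Finsupp.single (k01, k11) (1) + Finsupp.single (k11, k01) (-1)
  else if p = (k11, k00) then Finsupp.single (k11, k00) (1) + Finsupp.single (k11, k10) (-1) + Finsupp.single (k11, k01) (-1) + Finsupp.single (k11, k11) (1)
  else (0 : (K4 × K4) →₀ ℤ)

noncomputable def wVec (p : K4 × K4) : (K4 × K4 × K4) →₀ ℤ :=
  if p = (k00, k00) then Finsupp.single (k00, k00, k01) (-1) + Finsupp.single (k10, k10, k01) (-1) + Finsupp.single (k10, k01, k10) (1) + Finsupp.single (k10, k01, k11) (-1) + Finsupp.single (k01, k10, k01) (1)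
  else if p = (k00, k10) then Finsupp.single (k00, k00, k10) (1) + Finsupp.single (k00, k00, k01) (-1) + Finsupp.single (k10, k10, k01) (-1) + Finsupp.single (k10, k01, k10) (1) + Finsupp.single (k10, k01, k11) (-1) + Finsupp.single (k01, k10, k01) (1)
  else if p = (k00, k01) then Finsupp.single (k10, k10, k01) (-1) + Finsupp.single (k10, k01, k10) (1) + Finsupp.single (k10, k01, k11) (-1) + Finsupp.single (k01, k10, k01) (1)
  else if p = (k00, k11) then Finsupp.single (k00, k00, k01) (-1) + Finsupp.single (k00, k00, k11) (1) + Finsupp.single (k10, k10, k01) (-1) + Finsupp.single (k10, k01, k10) (1) + Finsupp.single (k10, k01, k11) (-1) + Finsupp.single (k01, k10, k01) (1)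
  else if p = (k10, k00) then Finsupp.single (k00, k00, k01) (-1) + Finsupp.single (k10, k00, k00) (-1) + Finsupp.single (k10, k10, k01) (-1) + Finsupp.single (k10, k01, k10) (1) + Finsupp.single (k10, k01, k11) (-1) + Finsupp.single (k01, k10, k01) (1)
  else if p = (k10, k10) then Finsupp.single (k00, k00, k01) (-1) + Finsupp.single (k10, k00, k00) (-1) + Finsupp.single (k10, k10, k01) (-1) + Finsupp.single (k10, k01, k10) (1) + Finsupp.single (k10, k01, k01) (-1)
  else if p = (k10, k01) then Finsupp.single (k00, k00, k01) (-1) + Finsupp.single (k10, k00, k00) (-1) + Finsupp.single (k10, k10, k01) (-1) + Finsupp.single (k10, k01, k10) (1) + Finsupp.single (k10, k01, k01) (-1) + Finsupp.single (k10, k01, k11) (-1) + Finsupp.single (k01, k10, k01) (1)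
  else if p = (k10, k11) then Finsupp.single (k10, k01, k10) (1)
  else if p = (k01, k00) then Finsupp.single (k00, k00, k01) (-1) + Finsupp.single (k10, k10, k01) (-1) + Finsupp.single (k10, k01, k10) (1) + Finsupp.single (k10, k01, k11) (-1) + Finsupp.single (k01, k00, k00) (-1) + Finsupp.single (k01, k10, k01) (1)
  else if p = (k01, k10) then Finsupp.single (k00, k00, k01) (-1) + Finsupp.single (k10, k00, k00) (-1) + Finsupp.single (k10, k10, k01) (-1) + Finsupp.single (k10, k01, k10) (1) + Finsupp.single (k10, k01, k01) (-1) + Finsupp.single (k10, k01, k11) (-1) + Finsupp.single (k01, k10, k01) (1)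
  else if p = (k01, k11) then Finsupp.single (k01, k10, k01) (1)
  else if p = (k11, k00) then Finsupp.single (k00, k00, k01) (-1) + Finsupp.single (k10, k10, k01) (-1) + Finsupp.single (k10, k01, k00) (-1) + Finsupp.single (k10, k01, k10) (1) + Finsupp.single (k10, k01, k11) (-1) + Finsupp.single (k01, k00, k00) (-1) + Finsupp.single (k01, k10, k01) (1)
  else (0 : (K4 × K4 × K4) →₀ ℤ)

def nVal (p : K4 × K4) : ℤ :=
  if p = (k10, k10) then 1
  else if p = (k10, k11) then 1
  else if p = (k01, k10) then -1
  else if p = (k01, k11) then -1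
  else (0:ℤ)

noncomputable def cVec (g : K4) : (K4 × K4) →₀ ℤ :=
  if g = k00 then Finsupp.single (k11, k10) (2) + Finsupp.single (k11, k01) (2) + Finsupp.single (k11, k11) (-2)
  else if g = k10 then Finsupp.single (k01, k01) (1) + Finsupp.single (k11, k10) (2) + Finsupp.single (k11, k11) (-1)
  else if g = k01 then Finsupp.single (k01, k01) (1) + Finsupp.single (k11, k10) (1) + Finsupp.single (k11, k01) (1) + Finsupp.single (k11, k11) (-1)
  else if g = k11 then Finsupp.single (k11, k10) (1) + Finsupp.single (k11, k01) (1)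
  else (0 : (K4 × K4) →₀ ℤ)

noncomputable def sigmah : ((K4 × K4) →₀ ℤ) →+ ((K4 × K4) →₀ ℤ) :=
  Finsupp.liftAddHom fun p => zmultiplesHom _ (uVec p)

noncomputable def tauh : ((K4 × K4) →₀ ℤ) →+ ((K4 × K4 × K4) →₀ ℤ) :=
  Finsupp.liftAddHom fun p => zmultiplesHom _ (wVec p)

noncomputable def nuh : ((K4 × K4) →₀ ℤ) →+ ℤ :=
  Finsupp.liftAddHom fun p => zmultiplesHom _ (nVal p)

noncomputable def chh : (K4 →₀ ℤ) →+ ((K4 × K4) →₀ ℤ) :=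
  Finsupp.liftAddHom fun g => zmultiplesHom _ (cVec g)

noncomputable def psih : ((K4 × K4) →₀ ℤ) →+ ZMod 2 :=
  Finsupp.liftAddHom fun p => zmultiplesHom _ (p.1.1 * p.2.2)

lemma ite_coe_apply {α M : Type*} [AddCommMonoid M] (c : Prop) [Decidable c]
    (f g : α →₀ M) (q : α) : (if c then f else g) q = if c then f q else g q := by
  split_ifs <;> rfl

lemma barD1_single (p : K4 × K4) (n : ℤ) :
    barD1 K4 (Finsupp.single p n) =
      Finsupp.single p.2 n - Finsupp.single (p.1 + p.2) n + Finsupp.single p.1 n := by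
  simp [barD1, Finsupp.liftAddHom_apply_single, zmultiplesHom_apply, smul_sub, smul_add,
    Finsupp.smul_single, smul_eq_mul, mul_one]

lemma barD2_single (t : K4 × K4 × K4) (n : ℤ) :
    barD2 K4 (Finsupp.single t n) =
      Finsupp.single (t.2.1, t.2.2) n - Finsupp.single (t.1 + t.2.1, t.2.2) n
        + Finsupp.single (t.1, t.2.1 + t.2.2) n - Finsupp.single (t.1, t.2.1) n := by
  simp [barD2, Finsupp.liftAddHom_apply_single, zmultiplesHom_apply, smul_sub, smul_add,
    Finsupp.smul_single, smul_eq_mul, mul_one]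

lemma sigmah_single (p : K4 × K4) (n : ℤ) : sigmah (Finsupp.single p n) = n • uVec p := by
  simp [sigmah, Finsupp.liftAddHom_apply_single, zmultiplesHom_apply]

lemma tauh_single (p : K4 × K4) (n : ℤ) : tauh (Finsupp.single p n) = n • wVec p := by
  simp [tauh, Finsupp.liftAddHom_apply_single, zmultiplesHom_apply]

lemma nuh_single (p : K4 × K4) (n : ℤ) : nuh (Finsupp.single p n) = n * nVal p := by
  simp [nuh, Finsupp.liftAddHom_apply_single, zmultiplesHom_apply, smul_eq_mul]

lemma chh_single (g : K4) (n : ℤ) : chh (Finsupp.single g n) = n • cVec g := by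
  simp [chh, Finsupp.liftAddHom_apply_single, zmultiplesHom_apply]

lemma psih_single (p : K4 × K4) (n : ℤ) :
    psih (Finsupp.single p n) = n • (p.1.1 * p.2.2) := by
  simp [psih, Finsupp.liftAddHom_apply_single, zmultiplesHom_apply]

/-- numeric certificate 1: `2 • (e_p - u_p) = C (d₁ e_p)`. -/
lemma E1base : ∀ p : K4 × K4,
    (2:ℤ) • (Finsupp.single p (1:ℤ) - uVec p) =
      cVec p.2 - cVec (p.1 + p.2) + cVec p.1 := by
  have h : ∀ p q : K4 × K4,
      ((2:ℤ) • (Finsupp.single p (1:ℤ) - uVec p)) q =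
        (cVec p.2 - cVec (p.1 + p.2) + cVec p.1) q := by
    simp only [uVec, cVec, Finsupp.smul_apply, Finsupp.sub_apply, Finsupp.add_apply, ite_coe_apply]
    simp only [uVec, cVec, Finsupp.smul_apply, Finsupp.sub_apply, Finsupp.add_apply,
      ite_coe_apply, Finsupp.single_apply, Finsupp.coe_zero, Pi.zero_apply, smul_eq_mul,
      k00, k10, k01, k11]
    decide
  exact fun p => Finsupp.ext (h p)

/-- numeric certificate 2: `u_p = d₂ w_p + n_p • z`. -/
lemma E2base : ∀ p : K4 × K4,
    uVec p = barD2 K4 (wVec p) + nVal p • zc := by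
  have h : ∀ p q : K4 × K4,
      (uVec p) q = (barD2 K4 (wVec p) + nVal p • zc) q := by
    intro p q
    rw [show barD2 K4 (wVec p) = _ from congrArg _ rfl]
    simp only [wVec, apply_ite (barD2 K4), map_add, map_zero, barD2_single]
    revert p q
    simp only [uVec, Finsupp.add_apply, Finsupp.smul_apply, ite_coe_apply]
    simp only [uVec, nVal, zc, Finsupp.add_apply, Finsupp.sub_apply, Finsupp.smul_apply,
      ite_coe_apply, Finsupp.single_apply, Finsupp.coe_zero, Pi.zero_apply, smul_eq_mul,
      ite_mul, mul_ite, k00, k10, k01, k11]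
    decide
  exact fun p => Finsupp.ext (h p)

lemma zc_cycle : barD1 K4 zc = 0 := by
  have h : ∀ q : K4, (barD1 K4 zc) q = (0 : K4 →₀ ℤ) q := by
    simp only [zc, map_sub, barD1_single, Finsupp.sub_apply, Finsupp.add_apply,
      Finsupp.single_apply, Finsupp.coe_zero, Pi.zero_apply, k00, k10, k01, k11]
    decide
  exact Finsupp.ext h

lemma cc_spec : barD2 K4 cc = (2:ℤ) • zc := by
  have h : ∀ q : K4 × K4, (barD2 K4 cc) q = ((2:ℤ) • zc) q := by
    simp only [cc, zc, map_add, map_sub, barD2_single, Finsupp.smul_apply, Finsupp.sub_apply,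
      Finsupp.add_apply, Finsupp.single_apply, smul_eq_mul, k00, k10, k01, k11]
    decide
  exact Finsupp.ext h

lemma psih_zc : psih zc = 1 := by
  rw [zc, map_sub, psih_single, psih_single]
  decide

lemma psih_barD2 (y : (K4 × K4 × K4) →₀ ℤ) : psih (barD2 K4 y) = 0 := by
  induction y using Finsupp.induction_linear with
  | zero => simp
  | add f g hf hg => simp [map_add, hf, hg]
  | single t n =>
    rw [barD2_single, map_sub, map_add, map_sub, psih_single, psih_single, psih_single,
      psih_single]
    simp only [Prod.fst_add, Prod.snd_add, zsmul_eq_mul]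
    ring

/-- hom identity 1: `2 • (x - σ x) = C (d₁ x)`. -/
lemma H1 (x : (K4 × K4) →₀ ℤ) :
    (2:ℤ) • (x - sigmah x) = chh (barD1 K4 x) := by
  induction x using Finsupp.induction_linear with
  | zero => simp
  | add f g hf hg =>
    rw [map_add, map_add, map_add, show f + g - (sigmah f + sigmah g)
      = (f - sigmah f) + (g - sigmah g) by abel, smul_add, hf, hg]
  | single p n =>
    rw [sigmah_single, barD1_single, map_add, map_sub, chh_single, chh_single, chh_single,
      show Finsupp.single p n - n • uVec p = n • (Finsupp.single p (1:ℤ) - uVec p) by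
        rw [smul_sub, Finsupp.smul_single, smul_eq_mul, mul_one],
      smul_comm, E1base, smul_add, smul_sub]

/-- hom identity 2: `σ x = d₂ (τ x) + (ν x) • z`. -/
lemma H2 (x : (K4 × K4) →₀ ℤ) :
    sigmah x = barD2 K4 (tauh x) + nuh x • zc := by
  induction x using Finsupp.induction_linear with
  | zero => simp
  | add f g hf hg =>
    rw [map_add, map_add, map_add, map_add, add_smul, hf, hg]; abel
  | single p n =>
    rw [sigmah_single, tauh_single, nuh_single, E2base, smul_add, map_zsmul, mul_smul,
      smul_comm n (nVal p)]


lemma key_mem (x : (K4 × K4) →₀ ℤ) (hx : barD1 K4 x = 0) (hpsi : psih x = 0) :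
    x ∈ (barD2 K4).range := by
  have hfix : x = sigmah x := by
    have h1 := H1 x
    rw [hx, map_zero] at h1
    rcases smul_eq_zero.mp h1 with h | h
    · exact absurd h (by norm_num)
    · exact (sub_eq_zero.mp h)
  have hdec : x = barD2 K4 (tauh x) + nuh x • zc := hfix.trans (H2 x)
  have hcast : ((nuh x : ℤ) : ZMod 2) = 0 := by
    have := congrArg psih hdec
    rw [hpsi, map_add, psih_barD2, map_zsmul, psih_zc, zero_add] at this
    rw [zsmul_eq_mul, mul_one] at this
    exact this.symm
  obtain ⟨m, hm⟩ : (2:ℤ) ∣ nuh x := by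
    exact_mod_cast (ZMod.intCast_zmod_eq_zero_iff_dvd (nuh x) 2).mp hcast
  refine ⟨tauh x + m • cc, ?_⟩
  rw [map_add, map_zsmul, cc_spec, smul_smul, mul_comm m 2, ← hm, ← hdec]

lemma zc_val : ∀ t : ZMod 2, t = 0 ∨ t = 1 := by decide

end H2K4Aux

open H2K4Aux in
/-- The second integral group homology of the Klein four-group is `ℤ/2`. -/
theorem h2_klein_four_group :
    Nonempty (groupHomologyTwo (ZMod 2 × ZMod 2) ≃+ ZMod 2) := by
  classical
  let Kr : AddSubgroup ((K4 × K4) →₀ ℤ) := (barD1 K4).ker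
  let phi : Kr →+ ZMod 2 := psih.comp Kr.subtype
  have hzmem : zc ∈ Kr := by
    simpa [Kr, AddMonoidHom.mem_ker] using zc_cycle
  have hsurj : Function.Surjective phi := by
    intro t
    rcases zc_val t with rfl | rfl
    · exact ⟨0, map_zero _⟩
    · exact ⟨⟨zc, hzmem⟩, psih_zc⟩
  have hker : (barD2 K4).range.addSubgroupOf Kr = phi.ker := by
    ext y
    rw [AddSubgroup.mem_addSubgroupOf, AddMonoidHom.mem_ker]
    constructor
    · rintro ⟨w, hw⟩
      show psih (y : (K4 × K4) →₀ ℤ) = 0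
      rw [← hw, psih_barD2]
    · intro h0
      exact key_mem (y : (K4 × K4) →₀ ℤ) (y.2) h0
  exact ⟨(QuotientAddGroup.quotientAddEquivOfEq hker).trans
    (QuotientAddGroup.quotientKerEquivOfSurjective phi hsurj)⟩
end
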